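/- Let k ≥ 2 and 2 ≤ j ≤ k. Then for every n ≥ 1, |Av_n(M_{k,j,j+1})| ≤ |Av_n(M_{k,j,j})|. -/

import Mathlib

/-- A permutation `p` of length `n` contains the pattern `q` of length `m` if some
strictly increasing choice of positions realizes the same relative order. -/
def Contains {n m : ℕ} (p : Equiv.Perm (Fin n)) (q : Equiv.Perm (Fin m)) : Prop :=
  ∃ f : Fin m → Fin n, StrictMono f ∧ ∀ a b : Fin m, q a < q b ↔ p (f a) < p (f b)

/-- The set of permutations of length `n` avoiding every member of `Q`. -/
def Av (n : ℕ) (Q : Set (Σ m, Equiv.Perm (Fin m))) : Set (Equiv.Perm (Fin n)) :=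
  {p | ∀ q ∈ Q, ¬ Contains p q.2}

/-- `sigmaP k j v` (for `1 ≤ j, v ≤ k+1`): the permutation of length `k+1` whose
`j`-th entry (1-indexed) is `v`, and whose remaining `k` entries, read left to right,
are the values of `{1,…,k+1} \ {v}` in increasing order. -/
def sigmaP (k j v : ℕ) : Equiv.Perm (Fin (k+1)) :=
  (finSuccEquiv' ⟨(j-1) % (k+1), Nat.mod_lt _ (Nat.succ_pos k)⟩).trans
    (finSuccEquiv' ⟨(v-1) % (k+1), Nat.mod_lt _ (Nat.succ_pos k)⟩).symm

/-- The almost distant monotone pattern `M_{k,j,i}`: the `k` permutations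
`σ_{k,j,v}` for `1 ≤ v ≤ k+1`, `v ≠ i`. -/
def MSet (k j i : ℕ) : Set (Σ m, Equiv.Perm (Fin m)) :=
  {q | ∃ v, 1 ≤ v ∧ v ≤ k + 1 ∧ v ≠ i ∧ q = ⟨k + 1, sigmaP k j v⟩}


namespace ADM

open Classical
noncomputable section

variable {n : ℕ}

/-- least `l` such that the whole integer interval `[l, x]` lies in `S`. -/
def rlo (S : Set (Fin n)) (x : Fin n) : ℕ :=
  sInf {l : ℕ | ∀ t : Fin n, l ≤ (t : ℕ) → (t : ℕ) ≤ (x : ℕ) → t ∈ S}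

/-- greatest `h < n` such that `[x, h] ⊆ S` (when `x ∈ S`). -/
def rhi (S : Set (Fin n)) (x : Fin n) : ℕ :=
  Nat.findGreatest (fun h => ∀ t : Fin n, (x : ℕ) ≤ (t : ℕ) → (t : ℕ) ≤ h → t ∈ S) (n - 1)

section
variable {S : Set (Fin n)} {x : Fin n}

lemma rlo_nonempty : {l : ℕ | ∀ t : Fin n, l ≤ (t : ℕ) → (t : ℕ) ≤ (x : ℕ) → t ∈ S}.Nonempty :=
  ⟨(x : ℕ) + 1, fun t ht ht' => absurd (le_trans ht ht') (by omega)⟩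

lemma rlo_le (hx : x ∈ S) : rlo S x ≤ (x : ℕ) := by
  apply Nat.sInf_le
  intro t ht ht'
  rwa [show t = x from Fin.ext (le_antisymm ht' ht)]

lemma rlo_mem_interval (_hx : x ∈ S) {t : Fin n} (h1 : rlo S x ≤ (t : ℕ)) (h2 : (t : ℕ) ≤ (x : ℕ)) :
    t ∈ S :=
  Nat.sInf_mem (rlo_nonempty (S := S) (x := x)) t h1 h2

lemma rlo_min {l : ℕ} (hl : ∀ t : Fin n, l ≤ (t : ℕ) → (t : ℕ) ≤ (x : ℕ) → t ∈ S) :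
    rlo S x ≤ l := Nat.sInf_le hl

/-- the position just before the run is not in `S`. -/
lemma pred_rlo_not_mem (hx : x ∈ S) {t : Fin n} (ht : (t : ℕ) + 1 = rlo S x) : t ∉ S := by
  intro htS
  have : rlo S x ≤ (t : ℕ) := by
    apply rlo_min
    intro s hs hs'
    rcases Nat.eq_or_lt_of_le hs with h | h
    · rwa [show s = t from Fin.ext h.symm]
    · exact rlo_mem_interval hx (by omega) hs'
  omega

lemma rhi_lt (_hx : x ∈ S) : rhi S x < n := by
  have h := Nat.findGreatest_le (P := fun h => ∀ t : Fin n, (x : ℕ) ≤ (t : ℕ) → (t : ℕ) ≤ h → t ∈ S) (n-1)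
  have := x.isLt
  unfold rhi; omega

lemma le_rhi (hx : x ∈ S) : (x : ℕ) ≤ rhi S x := by
  apply Nat.le_findGreatest (by have := x.isLt; omega)
  intro t ht ht'
  rwa [show t = x from Fin.ext (le_antisymm ht' ht)]

lemma rhi_mem_interval (hx : x ∈ S) {t : Fin n} (h1 : (x : ℕ) ≤ (t : ℕ)) (h2 : (t : ℕ) ≤ rhi S x) :
    t ∈ S := by
  have hP : ∀ t : Fin n, (x : ℕ) ≤ (t : ℕ) → (t : ℕ) ≤ (x : ℕ) → t ∈ S := by
    intro t ht ht'
    rwa [show t = x from Fin.ext (le_antisymm ht' ht)]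
  have hspec : ∀ t : Fin n, (x : ℕ) ≤ (t : ℕ) → (t : ℕ) ≤ rhi S x → t ∈ S :=
    Nat.findGreatest_spec (P := fun h => ∀ t : Fin n, (x : ℕ) ≤ (t : ℕ) → (t : ℕ) ≤ h → t ∈ S) (n := n - 1) (m := (x : ℕ)) (by have := x.isLt; omega) hP
  exact hspec t h1 h2

lemma rhi_max {m : ℕ} (hmn : m < n)
    (hm : ∀ t : Fin n, (x : ℕ) ≤ (t : ℕ) → (t : ℕ) ≤ m → t ∈ S) :
    m ≤ rhi S x :=
  Nat.le_findGreatest (by omega) hm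

lemma succ_rhi_not_mem (hx : x ∈ S) {t : Fin n} (ht : (t : ℕ) = rhi S x + 1) : t ∉ S := by
  intro htS
  have : (t : ℕ) ≤ rhi S x := by
    apply rhi_max t.isLt
    intro s hs hs'
    rcases Nat.eq_or_lt_of_le hs' with h | h
    · rwa [show s = t from Fin.ext h]
    · exact rhi_mem_interval hx hs (by omega)
  omega

/-- interval closure of runs -/
lemma run_mem (hx : x ∈ S) {t : Fin n} (h1 : rlo S x ≤ (t : ℕ)) (h2 : (t : ℕ) ≤ rhi S x) :
    t ∈ S := by
  rcases le_or_gt (t : ℕ) (x : ℕ) with h | h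
  · exact rlo_mem_interval hx h1 h
  · exact rhi_mem_interval hx (le_of_lt h) h2

/-- run invariance of `rlo`/`rhi`. -/
lemma run_eq (hx : x ∈ S) {y : Fin n} (h1 : rlo S x ≤ (y : ℕ)) (h2 : (y : ℕ) ≤ rhi S x) :
    rlo S y = rlo S x ∧ rhi S y = rhi S x := by
  have hy : y ∈ S := run_mem hx h1 h2
  constructor
  · apply le_antisymm
    · apply rlo_min
      intro t ht ht'
      exact run_mem hx ht (by omega)
    · apply rlo_min
      intro t ht ht'
      rcases le_or_gt (t : ℕ) (y : ℕ) with h | h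
      · exact rlo_mem_interval hy ht h
      · have := le_rhi hx
        exact run_mem hx (by omega) (by omega)
  · apply le_antisymm
    · refine rhi_max (x := x) (rhi_lt hy) ?_
      intro t ht ht'
      rcases le_or_gt (t : ℕ) (rhi S x) with h | h
      · exact run_mem hx (by have := rlo_le hx; omega) h
      · exact rhi_mem_interval hy (by omega) ht'
    · refine rhi_max (x := y) (rhi_lt hx) ?_
      intro t ht ht'
      exact run_mem hx (by omega) ht'

/-- if `x ≤ y`, `x ∈ S`, `y ∉ S` then `rhi x < y` -/
lemma rhi_lt_of_not_mem (hx : x ∈ S) {y : Fin n} (hxy : (x:ℕ) ≤ (y:ℕ)) (hy : y ∉ S) :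
    rhi S x < (y : ℕ) := by
  by_contra h
  exact hy (rhi_mem_interval hx hxy (by omega))

lemma lt_rlo_of_not_mem {y : Fin n} (hy : y ∈ S) (hxy : (x:ℕ) ≤ (y:ℕ)) (hx : x ∉ S) :
    (x : ℕ) < rlo S y := by
  by_contra h
  exact hx (rlo_mem_interval hy (by omega) hxy)

/-- separated runs leave a gap -/
lemma rhi_add_one_lt_rlo (hx : x ∈ S) {y : Fin n} (hy : y ∈ S) (h : rhi S x < (y : ℕ)) :
    rhi S x + 1 < rlo S y := by
  have hlt : rhi S x + 1 < n := by have := y.isLt; omega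
  have hgap : (⟨rhi S x + 1, hlt⟩ : Fin n) ∉ S := succ_rhi_not_mem hx rfl
  have := lt_rlo_of_not_mem (x := (⟨rhi S x + 1, hlt⟩ : Fin n)) hy (by simpa using h) hgap
  simpa using this

end

/-- the mirror map: reverse each run of `S`. -/
def mirror (S : Set (Fin n)) (x : Fin n) : Fin n :=
  if hx : x ∈ S then ⟨rlo S x + rhi S x - (x : ℕ), by have h1 := rlo_le hx; have := rhi_lt hx; omega⟩
  else x

section
variable {S : Set (Fin n)} {x : Fin n}

lemma mirror_coe (hx : x ∈ S) : (mirror S x : ℕ) = rlo S x + rhi S x - (x : ℕ) := by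
  simp [mirror, hx]

lemma mirror_of_not_mem (hx : x ∉ S) : mirror S x = x := by simp [mirror, hx]

lemma mirror_mem_run (hx : x ∈ S) :
    rlo S x ≤ (mirror S x : ℕ) ∧ (mirror S x : ℕ) ≤ rhi S x := by
  rw [mirror_coe hx]
  have h1 := rlo_le hx; have h2 := le_rhi hx
  omega

lemma mirror_mem (hx : x ∈ S) : mirror S x ∈ S :=
  run_mem hx (mirror_mem_run hx).1 (mirror_mem_run hx).2

lemma mirror_involutive : Function.Involutive (mirror S) := by
  intro x
  by_cases hx : x ∈ S
  · have hm := mirror_mem hx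
    have hrun := run_eq hx (mirror_mem_run hx).1 (mirror_mem_run hx).2
    apply Fin.ext
    rw [mirror_coe hm, hrun.1, hrun.2, mirror_coe hx]
    have h1 := rlo_le hx; have h2 := le_rhi hx
    omega
  · rw [mirror_of_not_mem hx, mirror_of_not_mem hx]

/-- order reversal inside a run -/
lemma mirror_reverse (hx : x ∈ S) {y : Fin n} (hy : y ∈ S)
    (hxy : x < y) (hrun : (y : ℕ) ≤ rhi S x) : mirror S y < mirror S x := by
  have h1 : rlo S x ≤ (y : ℕ) := by
    have := rlo_le hx; have : (x:ℕ) < (y:ℕ) := hxy; omega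
  have hrr := run_eq hx h1 hrun
  rw [Fin.lt_def, mirror_coe hx, mirror_coe hy, hrr.1, hrr.2]
  have := rlo_le hx; have := le_rhi hy
  have hxy' : (x:ℕ) < (y:ℕ) := hxy
  omega

/-- order preservation across runs -/
lemma mirror_preserve {y : Fin n} (hxy : x < y)
    (hsep : x ∈ S → y ∈ S → rhi S x < (y : ℕ)) : mirror S x < mirror S y := by
  have hxy' : (x:ℕ) < (y:ℕ) := hxy
  by_cases hx : x ∈ S <;> by_cases hy : y ∈ S
  · have h := hsep hx hy
    have h2 := rhi_add_one_lt_rlo hx hy h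
    have h3 := (mirror_mem_run hx).2
    have h4 := (mirror_mem_run hy).1
    rw [Fin.lt_def]; omega
  · rw [mirror_of_not_mem hy]
    have h1 := rhi_lt_of_not_mem hx (le_of_lt hxy') hy
    have h2 := (mirror_mem_run hx).2
    rw [Fin.lt_def]; omega
  · rw [mirror_of_not_mem hx]
    have h1 := lt_rlo_of_not_mem hy (le_of_lt hxy') hx
    have h2 := (mirror_mem_run hy).1
    rw [Fin.lt_def]; omega
  · rw [mirror_of_not_mem hx, mirror_of_not_mem hy]; exact hxy

end

end

end ADM

namespace ADM

open Classical
noncomputable section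

variable {n : ℕ}

/-- an increasing sequence (positions and values) of length `k` -/
def PSeq (k : ℕ) (p : Equiv.Perm (Fin n)) (u : ℕ → Fin n) : Prop :=
  ∀ i i', i < i' → i' < k → u i < u i' ∧ p (u i) < p (u i')

/-- a configuration: an increasing `k`-sequence with an extra point `w` sitting
positionally between entries `J-1` and `J` (0-indexed). -/
def Cfg (k J : ℕ) (p : Equiv.Perm (Fin n)) (u : ℕ → Fin n) (w : Fin n) : Prop :=
  PSeq k p u ∧ ∀ i, i < k → ((u i < w ↔ i < J) ∧ (w < u i ↔ J ≤ i))

/-- the value of `w` has rank `r` among the values of the sequence. -/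
def RankIs (k : ℕ) (p : Equiv.Perm (Fin n)) (u : ℕ → Fin n) (w : Fin n) (r : ℕ) : Prop :=
  ∀ i, i < k → ((p (u i) < p w ↔ i < r) ∧ (p w < p (u i) ↔ r ≤ i))

section Bridge

variable {k J : ℕ} {p : Equiv.Perm (Fin n)}

lemma coe_succAbove {m : ℕ} (i : Fin (m+1)) (y : Fin m) :
    ((i.succAbove y : Fin (m+1)) : ℕ) = if (y:ℕ) < (i:ℕ) then (y:ℕ) else (y:ℕ)+1 := by
  rcases Nat.lt_or_ge (y:ℕ) (i:ℕ) with h|h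
  · rw [Fin.succAbove_of_castSucc_lt _ _ (by simpa [Fin.lt_def] using h)]; simp [h]
  · rw [Fin.succAbove_of_le_castSucc _ _ (by simpa [Fin.le_def] using h)]; simp [Nat.not_lt.mpr h]

lemma sigmaP_coe (hJk : J + 1 ≤ k) {v : ℕ} (hv1 : 1 ≤ v) (hvk : v ≤ k + 1) (a : Fin (k+1)) :
    ((sigmaP k (J+1) v a : Fin (k+1)) : ℕ) =
      if (a:ℕ) = J then v - 1
      else if (if (a:ℕ) < J then (a:ℕ) else (a:ℕ) - 1) < v - 1
        then (if (a:ℕ) < J then (a:ℕ) else (a:ℕ) - 1)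
        else (if (a:ℕ) < J then (a:ℕ) else (a:ℕ) - 1) + 1 := by
  have hJ' : J < k + 1 := by omega
  set Jf : Fin (k+1) := ⟨J, hJ'⟩ with hJf
  set Vf : Fin (k+1) := ⟨v-1, by omega⟩ with hVf
  have e1 : (⟨(J + 1 - 1) % (k + 1), Nat.mod_lt _ (Nat.succ_pos k)⟩ : Fin (k+1)) = Jf := by
    apply Fin.ext; simp [Nat.mod_eq_of_lt hJ', hJf]
  have e2 : (⟨(v - 1) % (k + 1), Nat.mod_lt _ (Nat.succ_pos k)⟩ : Fin (k+1)) = Vf := by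
    apply Fin.ext; simp [Nat.mod_eq_of_lt (show v - 1 < k + 1 by omega), hVf]
  have hsig : ∀ x : Fin (k+1), sigmaP k (J+1) v x = (finSuccEquiv' Vf).symm ((finSuccEquiv' Jf) x) := by
    intro x; rw [sigmaP, e1, e2]; rfl
  by_cases ha : (a:ℕ) = J
  · have haJ : a = Jf := Fin.ext ha
    rw [hsig, haJ, finSuccEquiv'_at, finSuccEquiv'_symm_none]
    simp [ha, hVf, hJf]
  · set y : Fin k := ⟨if (a:ℕ) < J then (a:ℕ) else (a:ℕ) - 1, by
      rcases Nat.lt_or_ge (a:ℕ) J with h|h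
      · simp [h]; omega
      · have := a.isLt; simp [Nat.not_lt.mpr h]; omega⟩ with hy
    have hay : a = Jf.succAbove y := by
      apply Fin.ext
      rw [coe_succAbove]
      have hJfc : (Jf:ℕ) = J := rfl
      rcases Nat.lt_or_ge (a:ℕ) J with h|h
      · have hyc : (y:ℕ) = (a:ℕ) := by simp [hy, h]
        rw [hyc, hJfc, if_pos h]
      · have hyc : (y:ℕ) = (a:ℕ) - 1 := by simp [hy, Nat.not_lt.mpr h]
        rw [hyc, hJfc, if_neg (by omega)]
        omega
    have hmain : ((sigmaP k (J+1) v a : Fin (k+1)) : ℕ) =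
        if (y:ℕ) < v - 1 then (y:ℕ) else (y:ℕ) + 1 := by
      rw [hsig]
      conv_lhs => rw [hay]
      rw [finSuccEquiv'_succAbove, finSuccEquiv'_symm_some, coe_succAbove]
    rw [hmain, if_neg ha]

lemma cfg_contains (hJk : J + 1 ≤ k) {u : ℕ → Fin n} {w : Fin n} {r : ℕ}
    (hc : Cfg k J p u w) (hr : RankIs k p u w r) (hrk : r ≤ k) :
    Contains p (sigmaP k (J+1) (r+1)) := by
  obtain ⟨hu, hg⟩ := hc
  set f : Fin (k+1) → Fin n := fun a =>
    if (a:ℕ) < J then u (a:ℕ) else if (a:ℕ) = J then w else u ((a:ℕ) - 1) with hf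
  have hfval : ∀ a : Fin (k+1), (a:ℕ) ≠ J →
      f a = u (if (a:ℕ) < J then (a:ℕ) else (a:ℕ) - 1) := by
    intro a ha
    rcases Nat.lt_or_ge (a:ℕ) J with h|h
    · simp [hf, h]
    · have h' : ¬ ((a:ℕ) < J) := Nat.not_lt.mpr h
      simp [hf, h', ha]
  have hfw : ∀ a : Fin (k+1), (a:ℕ) = J → f a = w := by
    intro a ha
    simp [hf, ha]
  have hidxlt : ∀ a : Fin (k+1), (a:ℕ) ≠ J → (if (a:ℕ) < J then (a:ℕ) else (a:ℕ) - 1) < k := by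
    intro a ha; have := a.isLt
    rcases Nat.lt_or_ge (a:ℕ) J with h|h
    · simp [h]; omega
    · simp [Nat.not_lt.mpr h]; omega
  refine ⟨f, ?_, ?_⟩
  · -- strict monotone
    intro a b hab
    have hab' : (a:ℕ) < (b:ℕ) := hab
    have hbk := b.isLt
    by_cases ha : (a:ℕ) = J <;> by_cases hb : (b:ℕ) = J
    · omega
    · rw [hfw a ha, hfval b hb]
      refine (hg (if (b:ℕ) < J then (b:ℕ) else (b:ℕ) - 1) (hidxlt b hb)).2.mpr ?_
      split <;> omega
    · rw [hfval a ha, hfw b hb]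
      refine (hg (if (a:ℕ) < J then (a:ℕ) else (a:ℕ) - 1) (hidxlt a ha)).1.mpr ?_
      split <;> omega
    · rw [hfval a ha, hfval b hb]
      refine (hu _ _ ?_ (hidxlt b hb)).1
      split <;> split <;> omega
  · -- pattern equivalence
    intro a b
    rw [Fin.lt_def, sigmaP_coe hJk (by omega) (by omega) a, sigmaP_coe hJk (by omega) (by omega) b]
    have hr1 : r + 1 - 1 = r := by omega
    rw [hr1]
    by_cases ha : (a:ℕ) = J <;> by_cases hb : (b:ℕ) = J
    · have : a = b := Fin.ext (by omega)
      subst this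
      simp [ha]
    · rw [if_pos ha, if_neg hb, hfw a ha, hfval b hb]
      set yb := (if (b:ℕ) < J then (b:ℕ) else (b:ℕ) - 1) with hyb
      have hybk : yb < k := hidxlt b hb
      have h3 := hr yb hybk
      constructor
      · intro h; exact h3.2.mpr (by split at h <;> omega)
      · intro h; have := h3.2.mp h; split <;> omega
    · rw [if_neg ha, if_pos hb, hfval a ha, hfw b hb]
      set ya := (if (a:ℕ) < J then (a:ℕ) else (a:ℕ) - 1) with hya
      have hyak : ya < k := hidxlt a ha
      have h3 := hr ya hyak
      constructor
      · intro h; exact h3.1.mpr (by split at h <;> omega)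
      · intro h; have := h3.1.mp h; split <;> omega
    · rw [if_neg ha, if_neg hb, hfval a ha, hfval b hb]
      set ya := (if (a:ℕ) < J then (a:ℕ) else (a:ℕ) - 1) with hya
      set yb := (if (b:ℕ) < J then (b:ℕ) else (b:ℕ) - 1) with hyb
      have hyak : ya < k := hidxlt a ha
      have hybk : yb < k := hidxlt b hb
      have key : p (u ya) < p (u yb) ↔ ya < yb := by
        constructor
        · intro h
          rcases Nat.lt_trichotomy ya yb with h'|h'|h'
          · exact h'
          · exfalso; rw [h'] at h; exact lt_irrefl _ h
          · exact absurd ((hu _ _ h' hyak).2) (lt_asymm h)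
        · intro h; exact (hu _ _ h hybk).2
      rw [key]
      split <;> split <;> omega

lemma contains_cfg (hJk : J + 1 ≤ k) {v : ℕ} (hv1 : 1 ≤ v) (hvk : v ≤ k + 1)
    (h : Contains p (sigmaP k (J+1) v)) :
    ∃ u w, Cfg k J p u w ∧ RankIs k p u w (v-1) := by
  obtain ⟨f, hf, hiff⟩ := h
  have hJ' : J < k + 1 := by omega
  set w : Fin n := f ⟨J, hJ'⟩ with hw
  have hmk : ∀ i, i < k → (if i < J then i else i + 1) < k + 1 := by intro i hi; split <;> omega
  set u : ℕ → Fin n := fun i =>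
    if h : i < k then f ⟨if i < J then i else i + 1, hmk i h⟩ else f ⟨0, by omega⟩
    with hu
  have hui : ∀ i (hi : i < k), u i = f ⟨if i < J then i else i + 1, hmk i hi⟩ := by
    intro i hi; simp [hu, hi]
  have hpos : ∀ i, i < k → ((u i < w ↔ i < J) ∧ (w < u i ↔ J ≤ i)) := by
    intro i hi
    rw [hui i hi, hw, hf.lt_iff_lt, hf.lt_iff_lt, Fin.lt_def, Fin.lt_def]
    simp only [Fin.val_mk]
    constructor
    · constructor
      · intro h'; split at h' <;> omega
      · intro h'; rw [if_pos h']; omega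
    · constructor
      · intro h'; split at h' <;> omega
      · intro h'; rw [if_neg (by omega)]; omega
  have hσ : ∀ i (hi : i < k),
      ((sigmaP k (J+1) v (⟨if i < J then i else i + 1, hmk i hi⟩ : Fin (k+1)) : Fin (k+1)) : ℕ)
        = if i < v - 1 then i else i + 1 := by
    intro i hi
    rcases Nat.lt_or_ge i J with hiJ|hiJ
    · have e : (⟨if i < J then i else i + 1, hmk i hi⟩ : Fin (k+1)) = ⟨i, by omega⟩ := by
        apply Fin.ext; simp [hiJ]
      rw [e, sigmaP_coe hJk hv1 hvk]
      simp only [Fin.val_mk]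
      rw [if_neg (show ¬ (i = J) by omega), if_pos hiJ]
    · have e : (⟨if i < J then i else i + 1, hmk i hi⟩ : Fin (k+1)) = ⟨i+1, by omega⟩ := by
        apply Fin.ext; simp [Nat.not_lt.mpr hiJ]
      rw [e, sigmaP_coe hJk hv1 hvk]
      simp only [Fin.val_mk]
      rw [if_neg (show ¬ (i + 1 = J) by omega), if_neg (show ¬ (i + 1 < J) by omega)]
      simp only [Nat.add_sub_cancel]
  have hσJ : ((sigmaP k (J+1) v (⟨J, hJ'⟩ : Fin (k+1)) : Fin (k+1)) : ℕ) = v - 1 := by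
    rw [sigmaP_coe hJk hv1 hvk]; simp
  have hval : ∀ i, i < k → ((p (u i) < p w ↔ i < v - 1) ∧ (p w < p (u i) ↔ v - 1 ≤ i)) := by
    intro i hi
    rw [hui i hi, hw, ← hiff, ← hiff, Fin.lt_def, Fin.lt_def, hσ i hi, hσJ]
    constructor
    · split <;> omega
    · split <;> omega
  refine ⟨u, w, ⟨?_, hpos⟩, hval⟩
  intro i i' hii' hi'
  have hik : i < k := by omega
  rw [hui i hik, hui i' hi']
  constructor
  · apply hf
    rw [Fin.lt_def]; simp only [Fin.val_mk]
    split <;> split <;> omega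
  · rw [← hiff, Fin.lt_def, hσ i hik, hσ i' hi']
    split <;> split <;> omega

lemma cfg_rank {u : ℕ → Fin n} {w : Fin n}
    (hc : Cfg k J p u w) : ∃ r, r ≤ k ∧ RankIs k p u w r := by
  obtain ⟨hu, hg⟩ := hc
  have hne : ∀ i, i < k → u i ≠ w := by
    intro i hi heq
    have h1 := (hg i hi).1
    have h2 := (hg i hi).2
    rw [heq] at h1 h2
    simp at h1 h2
    omega
  have hpne : ∀ i, i < k → p (u i) ≠ p w := by
    intro i hi hpe
    exact hne i hi (p.injective hpe)
  by_cases hex : ∃ i, i < k ∧ ¬ (p (u i) < p w)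
  · set r := Nat.find hex with hr
    obtain ⟨hrk, hrval⟩ := Nat.find_spec hex
    have hmin : ∀ i, i < r → p (u i) < p w := by
      intro i hi
      by_contra hcon
      have hik : i < k := by omega
      exact Nat.find_min hex hi ⟨hik, hcon⟩
    have hwr : p w < p (u r) :=
      lt_of_le_of_ne (le_of_not_gt hrval) (Ne.symm (hpne r hrk))
    refine ⟨r, by omega, ?_⟩
    intro i hi
    constructor
    · constructor
      · intro h
        by_contra hcon
        rcases Nat.eq_or_lt_of_le (Nat.le_of_not_lt hcon) with h'|h'
        · rw [← h'] at h; exact absurd h (lt_asymm hwr)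
        · exact absurd ((hu _ _ h' hi).2.trans h) (lt_asymm hwr)
      · exact hmin i
    · constructor
      · intro h
        by_contra hcon
        exact absurd (h.trans (hmin i (by omega))) (lt_irrefl _)
      · intro h
        rcases Nat.eq_or_lt_of_le h with h'|h'
        · rw [← h']; exact hwr
        · exact hwr.trans (hu _ _ h' hi).2
  · push_neg at hex
    refine ⟨k, le_refl _, ?_⟩
    intro i hi
    have hlt := hex i hi
    constructor
    · constructor
      · intro _; exact hi
      · intro _; exact hlt
    · constructor
      · intro h; exact absurd (h.trans hlt) (lt_irrefl _)
      · intro h; omega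

lemma av_iff (hJ1 : 1 ≤ J) (hJk : J + 1 ≤ k) {i : ℕ} (hi1 : 1 ≤ i) (hik : i ≤ k + 1) :
    (p ∈ Av n (MSet k (J+1) i)) ↔ ∀ u w, Cfg k J p u w → RankIs k p u w (i-1) := by
  constructor
  · intro hav u w hc
    obtain ⟨r, hrk, hr⟩ := cfg_rank hc
    have hri : r = i - 1 := by
      by_contra hcon
      have hmem : (⟨k+1, sigmaP k (J+1) (r+1)⟩ : Σ m, Equiv.Perm (Fin m)) ∈ MSet k (J+1) i :=
        ⟨r+1, by omega, by omega, by omega, rfl⟩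
      exact hav _ hmem (cfg_contains hJk hc hr hrk)
    rwa [hri] at hr
  · rintro h ⟨m, q⟩ ⟨v, hv1, hvk, hvi, hq⟩ hcont
    cases hq
    obtain ⟨u, w, hc, hr⟩ := contains_cfg hJk hv1 hvk hcont
    have hr' := h u w hc
    have hvi' : v - 1 ≠ i - 1 := fun h' => hvi (by omega)
    rcases Nat.lt_or_ge (v-1) (i-1) with h'|h'
    · have hk1 : v - 1 < k := by omega
      have h1 : p (u (v-1)) < p w := (hr' (v-1) hk1).1.mpr h'
      have h2 : p w < p (u (v-1)) := (hr (v-1) hk1).2.mpr (le_refl _)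
      exact absurd (h1.trans h2) (lt_irrefl _)
    · have hlt : i - 1 < v - 1 := by omega
      have hk1 : i - 1 < k := by omega
      have h1 : p (u (i-1)) < p w := (hr (i-1) hk1).1.mpr hlt
      have h2 : p w < p (u (i-1)) := (hr' (i-1) hk1).2.mpr (le_refl _)
      exact absurd (h1.trans h2) (lt_irrefl _)

end Bridge

end

end ADM

namespace ADM

open Classical
noncomputable section

variable {n : ℕ}

/-- the set of positions covered by some configuration interval `[w, u J]`. -/
def Dst (k J : ℕ) (p : Equiv.Perm (Fin n)) : Set (Fin n) :=
  {t | ∃ u w, Cfg k J p u w ∧ w ≤ t ∧ t ≤ u J}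

section Struct

variable {k J : ℕ} {p : Equiv.Perm (Fin n)}

lemma cfg_head_lt (hJk : J + 1 ≤ k) {u : ℕ → Fin n} {w : Fin n} (hc : Cfg k J p u w) :
    w < u J := (hc.2 J (by omega)).2.mpr (le_refl J)

lemma cfg_mem_Dst {u : ℕ → Fin n} {w t : Fin n} (hc : Cfg k J p u w)
    (h1 : w ≤ t) (h2 : t ≤ u J) : t ∈ Dst k J p := ⟨u, w, hc, h1, h2⟩

lemma cfg_slide (hJk : J + 1 ≤ k) {u : ℕ → Fin n} {w : Fin n} (hc : Cfg k J p u w)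
    {t : Fin n} (h1 : w ≤ t) (h2 : t < u J) : Cfg k J p u t := by
  obtain ⟨hu, hg⟩ := hc
  have hmono_ge : ∀ i, J ≤ i → i < k → u J ≤ u i := by
    intro i hJi hik
    rcases Nat.eq_or_lt_of_le hJi with h|h
    · rw [← h]
    · exact le_of_lt (hu J i h hik).1
  refine ⟨hu, ?_⟩
  intro i hi
  constructor
  · constructor
    · intro h'
      by_contra hcon
      have h3 := hmono_ge i (by omega) hi
      exact absurd (lt_of_le_of_lt h3 h') (not_lt.mpr (le_of_lt h2))
    · intro h'
      exact lt_of_lt_of_le ((hg i hi).1.mpr h') h1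
  · constructor
    · intro h'
      by_contra hcon
      have h3 : u i < w := (hg i hi).1.mpr (by omega)
      exact absurd (h'.trans (lt_of_lt_of_le h3 h1)) (lt_irrefl _)
    · intro h'
      exact lt_of_lt_of_le h2 (hmono_ge i h' hi)

variable (hJ1 : 1 ≤ J) (hJk : J + 1 ≤ k)
  (hB : ∀ u w, Cfg k J p u w → RankIs k p u w (J+1))

include hJk hB in
lemma gap_desc {u : ℕ → Fin n} {w w' : Fin n} (hc : Cfg k J p u w) (hc' : Cfg k J p u w')
    (hww' : w < w') : p w' < p w := by
  classical
  set u' : ℕ → Fin n := fun i => if i = J then w' else u i with hu'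
  have hu'J : u' J = w' := by simp [hu']
  have hu'i : ∀ i, i ≠ J → u' i = u i := by intro i h; simp [hu', h]
  have hrk' := hB u w' hc'
  obtain ⟨hu, hg⟩ := hc
  obtain ⟨hu2, hg'⟩ := hc'
  have hc'' : Cfg k J p u' w := by
    refine ⟨?_, ?_⟩
    · intro i i' hii' hi'
      by_cases hiJ : i = J
      · subst hiJ
        rw [hu'J, hu'i i' (by omega)]
        exact ⟨(hg' i' hi').2.mpr (by omega), (hrk' i' hi').2.mpr (by omega)⟩
      · by_cases hi'J : i' = J
        · subst hi'J
          rw [hu'J, hu'i i hiJ]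
          exact ⟨(hg' i (by omega)).1.mpr (by omega), (hrk' i (by omega)).1.mpr (by omega)⟩
        · rw [hu'i i hiJ, hu'i i' hi'J]
          exact hu i i' hii' hi'
    · intro i hi
      by_cases hiJ : i = J
      · subst hiJ
        rw [hu'J]
        constructor
        · constructor
          · intro h'; exact absurd (hww'.trans h') (lt_irrefl _)
          · intro h'; omega
        · constructor
          · intro _; omega
          · intro _; exact hww'
      · rw [hu'i i hiJ]
        exact hg i hi
  have h6 := (hB u' w hc'') J (by omega)
  have hval : p (u' J) < p w := h6.1.mpr (by omega)
  rwa [hu'J] at hval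

include hJk hB in
lemma cfg_interval_desc {u : ℕ → Fin n} {w : Fin n} (hc : Cfg k J p u w) {s t : Fin n}
    (hs : w ≤ s) (hst : s < t) (ht : t ≤ u J) : p t < p s := by
  have hcs : Cfg k J p u s := cfg_slide hJk hc hs (lt_of_lt_of_le hst ht)
  rcases eq_or_lt_of_le ht with rfl|h
  · exact ((hB u s hcs) J (by omega)).1.mpr (by omega)
  · have hct : Cfg k J p u t := cfg_slide hJk hc (le_trans hs (le_of_lt hst)) h
    exact gap_desc hJk hB hcs hct hst

include hJ1 hJk hB in
lemma dst_desc_consec {x y : Fin n} (hx : x ∈ Dst k J p) (hy : y ∈ Dst k J p)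
    (hxy : (x:ℕ) + 1 = (y:ℕ)) : p y < p x := by
  obtain ⟨u, a, hc, hax, hxb⟩ := hx
  obtain ⟨u', a', hc', ha'y, hyb'⟩ := hy
  have hxy' : x < y := by rw [Fin.lt_def]; omega
  rcases le_or_gt y (u J) with h|h
  · exact cfg_interval_desc hJk hB hc hax hxy' h
  · rcases le_or_gt a' x with h2|h2
    · exact cfg_interval_desc hJk hB hc' h2 hxy' hyb'
    · have hxb' : x = u J := by
        apply Fin.ext
        have h4 : (u J : ℕ) < (y:ℕ) := h
        have h5 : (x:ℕ) ≤ (u J :ℕ) := hxb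
        omega
      have hya' : y = a' := by
        apply Fin.ext
        have h4 : (x:ℕ) < (a':ℕ) := h2
        have h5 : (a':ℕ) ≤ (y:ℕ) := ha'y
        omega
      rcases Nat.lt_or_ge ((u' (J-1)):ℕ) ((x:ℕ)) with h3|h3
      · -- x is itself a gap point of u'
        have hcx : Cfg k J p u' x := by
          refine ⟨hc'.1, ?_⟩
          intro i hi
          have himp1 : i < J → u' i < x := by
            intro hiJ
            rcases Nat.eq_or_lt_of_le (show i ≤ J-1 by omega) with he|hlt2
            · have : i = J - 1 := he
              rw [this, Fin.lt_def]
              exact h3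
            · have h7 := (hc'.1 i (J-1) (by omega) (by omega)).1
              exact lt_trans h7 (by rw [Fin.lt_def]; exact h3)
          have himp2 : J ≤ i → x < u' i := by
            intro hiJ
            have h7 : a' < u' i := by
              rcases Nat.eq_or_lt_of_le hiJ with he|hlt2
              · rw [← he]; exact cfg_head_lt hJk hc'
              · exact (hc'.2 i hi).2.mpr (by omega)
            calc x < y := hxy'
            _ = a' := hya'
            _ < u' i := h7
          constructor
          · constructor
            · intro h'
              by_contra hcon
              exact absurd (h'.trans (himp2 (by omega))) (lt_irrefl _)
            · exact himp1
          · constructor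
            · intro h'
              by_contra hcon
              exact absurd (h'.trans (himp1 (by omega))) (lt_irrefl _)
            · exact himp2
        have := gap_desc hJk hB hcx (hya' ▸ hc') (hya' ▸ hxy')
        exact hya' ▸ this
      · -- u' (J-1) = x forces a contradiction
        have he : u' (J-1) = x := by
          apply Fin.ext
          have h4 : u' (J-1) < a' := (hc'.2 (J-1) (by omega)).1.mpr (by omega)
          rw [Fin.lt_def] at h4
          have h5 : (a':ℕ) = (x:ℕ) + 1 := by
            have := congrArg (fun z : Fin n => (z:ℕ)) hya'
            omega
          omega
        have hpxa' : p x < p a' := by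
          have h5 := ((hB u' a' hc') (J-1) (by omega)).1.mpr (by omega)
          rwa [he] at h5
        set vseq : ℕ → Fin n := fun i => if i < J then u i else if i = J then a' else u' i
          with hvseq
        have hvJ : vseq J = a' := by simp [hvseq]
        have hvlt : ∀ i, i < J → vseq i = u i := by intro i h'; simp [hvseq, h']
        have hvgt : ∀ i, J < i → vseq i = u' i := by
          intro i h'
          have h1 : ¬ (i < J) := by omega
          have h2 : i ≠ J := by omega
          simp [hvseq, h1, h2]
        have hua : ∀ i, i < J → u i < a ∧ p (u i) < p x := by
          intro i hiJ
          refine ⟨(hc.2 i (by omega)).1.mpr hiJ, ?_⟩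
          have h7 := (hc.1 i J hiJ (by omega)).2
          rwa [← hxb'] at h7
        have hrka' := hB u' a' hc'
        have hxlta' : x < a' := hya' ▸ hxy'
        have hcfg2 : Cfg k J p vseq x := by
          refine ⟨?_, ?_⟩
          · intro i i' hii' hi'
            by_cases h1 : i < J
            · rw [hvlt i h1]
              by_cases h2 : i' < J
              · rw [hvlt i' h2]
                exact hc.1 i i' hii' (by omega)
              · have hui' := hua i h1
                by_cases h3 : i' = J
                · rw [h3, hvJ]
                  constructor
                  · calc u i < a := hui'.1
                    _ ≤ x := hax
                    _ < a' := hxlta'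
                  · exact hui'.2.trans hpxa'
                · rw [hvgt i' (by omega)]
                  have h8 : a' < u' i' := (hc'.2 i' hi').2.mpr (by omega)
                  have h9 : p a' < p (u' i') := (hrka' i' hi').2.mpr (by omega)
                  constructor
                  · calc u i < a := hui'.1
                    _ ≤ x := hax
                    _ < a' := hxlta'
                    _ < u' i' := h8
                  · exact hui'.2.trans (hpxa'.trans h9)
            · by_cases h2 : i = J
              · subst h2
                rw [hvJ, hvgt i' (by omega)]
                exact ⟨(hc'.2 i' hi').2.mpr (by omega), (hrka' i' hi').2.mpr (by omega)⟩
              · rw [hvgt i (by omega), hvgt i' (by omega)]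
                exact hc'.1 i i' hii' hi'
          · intro i hi
            have himp1 : i < J → vseq i < x := by
              intro h1
              rw [hvlt i h1]
              exact lt_of_lt_of_le (hua i h1).1 hax
            have himp2 : J ≤ i → x < vseq i := by
              intro h1
              rcases Nat.eq_or_lt_of_le h1 with he2|hlt2
              · rw [← he2, hvJ]; exact hxlta'
              · rw [hvgt i hlt2]
                exact hxlta'.trans ((hc'.2 i hi).2.mpr (by omega))
            constructor
            · constructor
              · intro h'
                by_contra hcon
                exact absurd (h'.trans (himp2 (by omega))) (lt_irrefl _)
              · exact himp1
            · constructor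
              · intro h'
                by_contra hcon
                exact absurd (h'.trans (himp1 (by omega))) (lt_irrefl _)
              · exact himp2
        have h6 : p (vseq J) < p x := ((hB vseq x hcfg2) J (by omega)).1.mpr (by omega)
        rw [hvJ] at h6
        exact absurd (h6.trans hpxa') (lt_irrefl _)

include hJ1 hJk hB in
lemma run_desc {x y : Fin n} (hx : x ∈ Dst k J p) (hxy : (x:ℕ) < (y:ℕ))
    (hy : (y:ℕ) ≤ rhi (Dst k J p) x) : p y < p x := by
  have main : ∀ d (x y : Fin n), x ∈ Dst k J p → (x:ℕ) < (y:ℕ) →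
      (y:ℕ) ≤ rhi (Dst k J p) x → (y:ℕ) - (x:ℕ) = d + 1 → p y < p x := by
    intro d
    induction d with
    | zero =>
      intro x y hx hxy hy hd
      have hyD : y ∈ Dst k J p := rhi_mem_interval hx (by omega) hy
      exact dst_desc_consec hJ1 hJk hB hx hyD (by omega)
    | succ d ih =>
      intro x y hx hxy hy hd
      have hzlt : (x:ℕ) + 1 < n := by have := y.isLt; omega
      set z : Fin n := ⟨(x:ℕ)+1, hzlt⟩ with hz
      have hzD : z ∈ Dst k J p := rhi_mem_interval hx (by simp [hz]) (by simp [hz]; omega)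
      have h1 : p z < p x := dst_desc_consec hJ1 hJk hB hx hzD (by simp [hz])
      have hrun := run_eq hx (show rlo (Dst k J p) x ≤ (z:ℕ) by have := rlo_le hx; simp [hz]; omega)
        (show (z:ℕ) ≤ rhi (Dst k J p) x by simp [hz]; omega)
      have h2 : p y < p z := ih z y hzD (by simp [hz]; omega) (by rw [hrun.2]; omega) (by simp [hz]; omega)
      exact h2.trans h1
  exact main ((y:ℕ) - (x:ℕ) - 1) x y hx hxy hy (by omega)

include hJ1 hJk hB in
lemma block_seq {x : Fin n} (hx : x ∈ Dst k J p) :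
    ∃ U : ℕ → Fin n, PSeq k p U ∧ ((U (J-1)):ℕ) + 1 = rlo (Dst k J p) x ∧
      ((U J):ℕ) = rhi (Dst k J p) x ∧
      (∀ t : Fin n, rlo (Dst k J p) x ≤ (t:ℕ) → (t:ℕ) < rhi (Dst k J p) x → Cfg k J p U t) := by
  set D := Dst k J p with hD
  have hrhilt : rhi D x < n := rhi_lt hx
  set h0 : Fin n := ⟨rhi D x, hrhilt⟩ with hh0
  have hh0D : h0 ∈ D := rhi_mem_interval hx (le_rhi hx) (by simp [hh0])
  obtain ⟨u, w, hc, hwh, hhb⟩ := hh0D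
  have hrun := run_eq hx (show rlo D x ≤ (h0:ℕ) by have := rlo_le hx; have := le_rhi hx; simp [hh0]; omega)
    (show (h0:ℕ) ≤ rhi D x by simp [hh0])
  have hble : (u J : ℕ) ≤ rhi D x := by
    rw [← hrun.2]
    apply rhi_max (u J).isLt
    intro t ht ht'
    exact cfg_mem_Dst hc (le_trans hwh (by rw [Fin.le_def]; simpa [hh0] using ht)) (by rw [Fin.le_def]; exact ht')
  have huJ : (u J : ℕ) = rhi D x := by
    have : (h0:ℕ) ≤ (u J :ℕ) := hhb
    simp [hh0] at this
    omega
  -- every point of the open interval (u (J-1), rhi) is a gap point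
  have hgap : ∀ t : Fin n, ((u (J-1)):ℕ) < (t:ℕ) → (t:ℕ) < rhi D x → Cfg k J p u t := by
    intro t h1 h2
    refine ⟨hc.1, ?_⟩
    intro i hi
    have himp1 : i < J → u i < t := by
      intro hiJ
      rcases Nat.eq_or_lt_of_le (show i ≤ J-1 by omega) with he|hlt2
      · have hieq : i = J - 1 := he
        rw [hieq, Fin.lt_def]; exact h1
      · exact lt_trans (hc.1 i (J-1) (by omega) (by omega)).1 (by rw [Fin.lt_def]; exact h1)
    have himp2 : J ≤ i → t < u i := by
      intro hiJ
      have h3 : (u J : ℕ) ≤ (u i : ℕ) := by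
        rcases Nat.eq_or_lt_of_le hiJ with he|hlt2
        · rw [← he]
        · exact le_of_lt (hc.1 J i hlt2 hi).1
      rw [Fin.lt_def]; omega
    constructor
    · constructor
      · intro h'
        by_contra hcon
        exact absurd (h'.trans (himp2 (by omega))) (lt_irrefl _)
      · exact himp1
    · constructor
      · intro h'
        by_contra hcon
        exact absurd (h'.trans (himp1 (by omega))) (lt_irrefl _)
      · exact himp2
  -- the interval (u(J-1), rhi] is inside D
  have hDint : ∀ t : Fin n, ((u (J-1)):ℕ) < (t:ℕ) → (t:ℕ) ≤ rhi D x → t ∈ D := by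
    intro t h1 h2
    rcases Nat.eq_or_lt_of_le h2 with he|hlt2
    · have : t = h0 := Fin.ext (by simp [hh0]; omega)
      rw [this]; exact rhi_mem_interval hx (le_rhi hx) (by simp [hh0])
    · exact cfg_mem_Dst (hgap t h1 hlt2) (le_refl _) (by rw [Fin.le_def]; omega)
  have hlole : rlo D x ≤ (u (J-1) :ℕ) + 1 := by
    rw [← hrun.1]
    apply rlo_min
    intro t ht ht'
    exact hDint t (by omega) (by simp [hh0] at ht'; omega)
  have hlogt : ((u (J-1)):ℕ) < rlo D x := by
    by_contra hcon
    push_neg at hcon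
    have hmem : u (J-1) ∈ D := run_mem hx hcon (by
      have := (hc.1 (J-1) J (by omega) (by omega)).1
      rw [Fin.lt_def] at this; omega)
    have hdesc : p h0 < p (u (J-1)) := run_desc hJ1 hJk hB hmem (by
        have := (hc.1 (J-1) J (by omega) (by omega)).1
        rw [Fin.lt_def] at this; simp [hh0]; omega)
      (by simp [hh0]; rw [(run_eq hx hcon (by
        have := (hc.1 (J-1) J (by omega) (by omega)).1
        rw [Fin.lt_def] at this; omega)).2])
    have hmono : p (u (J-1)) < p (u J) := (hc.1 (J-1) J (by omega) (by omega)).2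
    have huJh0 : u J = h0 := Fin.ext (by simp [hh0]; omega)
    rw [huJh0] at hmono
    exact absurd (hmono.trans hdesc) (lt_irrefl _)
  refine ⟨u, hc.1, by omega, huJ, ?_⟩
  intro t ht ht'
  exact hgap t (by omega) ht'

include hJ1 hJk hB in
/-- packaged block structure: the block sequence together with its windows. -/
lemma block_struct {x : Fin n} (hx : x ∈ Dst k J p) :
    ∃ U : ℕ → Fin n, PSeq k p U ∧ ((U (J-1)):ℕ) + 1 = rlo (Dst k J p) x ∧
      ((U J):ℕ) = rhi (Dst k J p) x ∧
      (∀ t : Fin n, rlo (Dst k J p) x ≤ (t:ℕ) → (t:ℕ) ≤ rhi (Dst k J p) x →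
        ∀ i, J + 1 ≤ i → i < k → p t < p (U i)) ∧
      (∀ t : Fin n, rlo (Dst k J p) x ≤ (t:ℕ) → (t:ℕ) ≤ rhi (Dst k J p) x →
        p (U (J-1)) < p t) := by
  obtain ⟨U, hU, hUl, hUh, hUgap⟩ := block_seq hJ1 hJk hB hx
  have hhi : ∀ t : Fin n, (t:ℕ) = rhi (Dst k J p) x → t = U J := by
    intro t ht; exact Fin.ext (by omega)
  refine ⟨U, hU, hUl, hUh, ?_, ?_⟩
  · intro t h1 h2 i hi1 hi2
    rcases Nat.eq_or_lt_of_le h2 with he|hlt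
    · rw [hhi t he]
      exact (hU J i (by omega) hi2).2
    · exact ((hB U t (hUgap t h1 hlt)) i hi2).2.mpr (by omega)
  · intro t h1 h2
    rcases Nat.eq_or_lt_of_le h2 with he|hlt
    · rw [hhi t he]
      exact (hU (J-1) J (by omega) (by omega)).2
    · exact ((hB U t (hUgap t h1 hlt)) (J-1) (by omega)).1.mpr (by omega)

include hJ1 hJk hB in
lemma rlo_pos {x : Fin n} (hx : x ∈ Dst k J p) : 1 ≤ rlo (Dst k J p) x := by
  obtain ⟨U, hU, hUl, hUh, hUgap⟩ := block_seq hJ1 hJk hB hx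
  omega

include hJ1 hJk hB in
lemma dst_bounds {x : Fin n} (hx : x ∈ Dst k J p) :
    rlo (Dst k J p) x < rhi (Dst k J p) x := by
  obtain ⟨u, w, hc, hwx, hxb⟩ := hx
  have h1 : rlo (Dst k J p) x ≤ (w:ℕ) := by
    apply rlo_min
    intro t ht ht'
    exact cfg_mem_Dst hc (by rw [Fin.le_def]; exact ht) (by rw [Fin.le_def]; have h2 : (x:ℕ) ≤ (u J :ℕ) := hxb; omega)
  have h2 : (u J : ℕ) ≤ rhi (Dst k J p) x := by
    apply rhi_max (u J).isLt
    intro t ht ht'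
    exact cfg_mem_Dst hc (by rw [Fin.le_def]; have h3 : (w:ℕ) ≤ (x:ℕ) := hwx; omega) (by rw [Fin.le_def]; exact ht')
  have h3 : w < u J := cfg_head_lt hJk hc
  rw [Fin.lt_def] at h3
  omega

end Struct

end

end ADM

namespace ADM

open Classical
noncomputable section

variable {n : ℕ}

section Sep

variable {S : Set (Fin n)}

lemma run_sep {x y : Fin n} (hx : x ∈ S) (hy : y ∈ S) (h : (x:ℕ) < rlo S y) :
    rhi S x < rlo S y := by
  by_contra hcon
  push_neg at hcon
  have hzlt : rlo S y < n := by have := rlo_le hy; have := y.isLt; omega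
  set z : Fin n := ⟨rlo S y, hzlt⟩ with hz
  have h1 : rlo S x ≤ (z:ℕ) := by have := rlo_le hx; simp [hz]; omega
  have h2 : (z:ℕ) ≤ rhi S x := by simp [hz]; omega
  have h3 := run_eq hx h1 h2
  have h4 : rlo S y ≤ (z:ℕ) := by simp [hz]
  have h5 : (z:ℕ) ≤ rhi S y := by have := rlo_le hy; have := le_rhi hy; simp [hz]; omega
  have h6 := run_eq hy h4 h5
  have := rlo_le hx
  omega

/-- upper bound for a point or its run -/
def rhiOr (S : Set (Fin n)) (x : Fin n) : ℕ :=
  if x ∈ S then rhi S x else (x:ℕ)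

lemma le_rhiOr {x : Fin n} : (x:ℕ) ≤ rhiOr S x := by
  unfold rhiOr; split
  · exact le_rhi ‹_›
  · exact le_refl _

lemma mirror_le_rhiOr {x : Fin n} : ((mirror S x):ℕ) ≤ rhiOr S x := by
  unfold rhiOr; split
  · exact (mirror_mem_run ‹_›).2
  · rw [mirror_of_not_mem ‹_›]

lemma rhiOr_lt_of_sep {x y : Fin n} (hy : y ∈ S) (hxy : (x:ℕ) < rlo S y) :
    rhiOr S x < rlo S y := by
  unfold rhiOr; split
  · exact run_sep ‹_› hy hxy
  · omega

lemma rhiOr_lt_of_not_mem {x y : Fin n} (hxy : x < y) (hy : y ∉ S) :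
    rhiOr S x < (y:ℕ) := by
  unfold rhiOr; split
  · exact rhi_lt_of_not_mem ‹_› (le_of_lt hxy) hy
  · exact hxy

end Sep

/-- the run-reversing permutation -/
def mirrorPerm (S : Set (Fin n)) : Equiv.Perm (Fin n) :=
  Function.Involutive.toPerm (mirror S) mirror_involutive

/-- the injection `Φ` -/
def Phi (k J : ℕ) (p : Equiv.Perm (Fin n)) : Equiv.Perm (Fin n) :=
  p * mirrorPerm (Dst k J p)

section QFacts

variable {k J : ℕ} {p : Equiv.Perm (Fin n)}

lemma phi_apply (x : Fin n) : Phi k J p x = p (mirror (Dst k J p) x) := rfl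

lemma phi_off {x : Fin n} (hx : x ∉ Dst k J p) : Phi k J p x = p x := by
  rw [phi_apply, mirror_of_not_mem hx]

lemma phi_mirror (x : Fin n) : Phi k J p (mirror (Dst k J p) x) = p x := by
  rw [phi_apply, mirror_involutive x]

variable (hJ1 : 1 ≤ J) (hJk : J + 1 ≤ k)
  (hB : ∀ u w, Cfg k J p u w → RankIs k p u w (J+1))

include hJ1 hJk hB in
lemma phi_run_mono {x y : Fin n} (hx : x ∈ Dst k J p) (hxy : x < y)
    (hy : (y:ℕ) ≤ rhi (Dst k J p) x) : Phi k J p x < Phi k J p y := by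
  set D := Dst k J p
  have hxy' : (x:ℕ) < (y:ℕ) := hxy
  have hyD : y ∈ D := run_mem hx (by have := rlo_le hx; omega) hy
  have hmir : mirror D y < mirror D x := mirror_reverse hx hyD hxy hy
  have hrunx := run_eq hx (mirror_mem_run hx).1 (mirror_mem_run hx).2
  have hruny0 := run_eq hx (show rlo D x ≤ (y:ℕ) by have := rlo_le hx; omega) hy
  have hruny := run_eq hyD (mirror_mem_run hyD).1 (mirror_mem_run hyD).2
  rw [phi_apply, phi_apply]
  refine run_desc hJ1 hJk hB (x := mirror D y) (y := mirror D x) (mirror_mem hyD)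
    (show ((mirror D y):ℕ) < ((mirror D x):ℕ) from hmir) ?_
  rw [hruny.2, hruny0.2]
  exact (mirror_mem_run hx).2

include hJ1 hJk hB in
lemma tail_seq {v : ℕ → Fin n}
    (hvm : ∀ m m', J ≤ m → m < m' → m' < k →
      v m < v m' ∧ Phi k J p (v m) < Phi k J p (v m')) :
    ∃ T : ℕ → Fin n, T J = mirror (Dst k J p) (v J) ∧
      (∀ m m', J ≤ m → m < m' → m' < k → T m < T m' ∧ p (T m) < p (T m')) := by
  have hpq : ∀ x : Fin n, p (mirror (Dst k J p) x) = Phi k J p x := fun x => (phi_apply x).symm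
  by_cases hex : ∃ m, (J ≤ m ∧ m < k) ∧ v m ∈ Dst k J p
  · have hleast : ∃ i₀, (J ≤ i₀ ∧ i₀ < k) ∧ v i₀ ∈ Dst k J p ∧
        ∀ m, J ≤ m → m < i₀ → v m ∉ Dst k J p := by
      refine ⟨Nat.find hex, (Nat.find_spec hex).1, (Nat.find_spec hex).2, ?_⟩
      intro m h1 h2 hmem
      have h3 := (Nat.find_spec hex).1.2
      exact Nat.find_min hex h2 ⟨⟨h1, by omega⟩, hmem⟩
    obtain ⟨i₀, ⟨hi₀J, hi₀k⟩, hi₀D, hmin⟩ := hleast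
    obtain ⟨U, hU, hUl, hUh, hWup, hWlo⟩ := block_struct hJ1 hJk hB hi₀D
    set T : ℕ → Fin n := fun m => if m ≤ i₀ then mirror (Dst k J p) (v m) else U m with hT
    have hTle : ∀ m, m ≤ i₀ → T m = mirror (Dst k J p) (v m) := by
      intro m h; simp [hT, h]
    have hTgt : ∀ m, i₀ < m → T m = U m := by
      intro m h; simp [hT, show ¬ (m ≤ i₀) by omega]
    have hTm : ∀ m'', J ≤ m'' → m'' < i₀ → mirror (Dst k J p) (v m'') = v m'' := by
      intro m'' ha hb; exact mirror_of_not_mem (hmin m'' ha hb)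
    refine ⟨T, hTle J hi₀J, ?_⟩
    intro m m' h1 h2 h3
    by_cases hc1 : m' ≤ i₀
    · rw [hTle m (by omega), hTle m' hc1]
      constructor
      · rcases Nat.lt_or_ge m' i₀ with h4|h4
        · rw [hTm m h1 (by omega), hTm m' (by omega) h4]
          exact (hvm m m' h1 h2 h3).1
        · have hm'i : m' = i₀ := by omega
          rw [hTm m h1 (by omega)]
          have h5 : (v m : ℕ) < rlo (Dst k J p) (v i₀) :=
            lt_rlo_of_not_mem hi₀D
              (le_of_lt (show (v m :ℕ) < (v i₀ :ℕ) from hm'i ▸ (hvm m m' h1 h2 h3).1))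
              (hmin m h1 (by omega))
          have h6 := (mirror_mem_run hi₀D).1
          rw [hm'i, Fin.lt_def]; omega
      · rw [hpq, hpq]
        exact (hvm m m' h1 h2 h3).2
    · rw [hTgt m' (by omega)]
      by_cases hc2 : m ≤ i₀
      · rw [hTle m hc2]
        have hmm : ((mirror (Dst k J p) (v m)):ℕ) ≤ rhi (Dst k J p) (v i₀) := by
          rcases Nat.lt_or_ge m i₀ with h4|h4
          · rw [hTm m h1 h4]
            have h5 : (v m : ℕ) < rlo (Dst k J p) (v i₀) :=
              lt_rlo_of_not_mem hi₀D (le_of_lt (hvm m i₀ h1 (by omega) hi₀k).1) (hmin m h1 h4)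
            have := rlo_le hi₀D; have := le_rhi hi₀D
            omega
          · have hmi : m = i₀ := by omega
            rw [hmi]
            exact (mirror_mem_run hi₀D).2
        constructor
        · have h5 : (U J : ℕ) < (U m' : ℕ) := (hU J m' (by omega) h3).1
          rw [Fin.lt_def]; omega
        · have h6 : p (mirror (Dst k J p) (v m)) ≤ p (mirror (Dst k J p) (v i₀)) := by
            rcases Nat.lt_or_ge m i₀ with h4|h4
            · rw [hpq, hpq]
              exact le_of_lt (hvm m i₀ h1 h4 hi₀k).2
            · have hmi : m = i₀ := by omega
              rw [hmi]
          have h7 : p (mirror (Dst k J p) (v i₀)) < p (U m') :=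
            hWup (mirror (Dst k J p) (v i₀)) (mirror_mem_run hi₀D).1
              (mirror_mem_run hi₀D).2 m' (by omega) h3
          exact lt_of_le_of_lt h6 h7
      · rw [hTgt m (by omega)]
        exact hU m m' h2 h3
  · push_neg at hex
    refine ⟨fun m => mirror (Dst k J p) (v m), rfl, ?_⟩
    intro m m' h1 h2 h3
    have hm : v m ∉ Dst k J p := hex m ⟨h1, by omega⟩
    have hm' : v m' ∉ Dst k J p := hex m' ⟨by omega, h3⟩
    show mirror (Dst k J p) (v m) < mirror (Dst k J p) (v m') ∧
      p (mirror (Dst k J p) (v m)) < p (mirror (Dst k J p) (v m'))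
    rw [mirror_of_not_mem hm, mirror_of_not_mem hm']
    refine ⟨(hvm m m' h1 h2 h3).1, ?_⟩
    rw [show p (v m) = Phi k J p (v m) from (phi_off hm).symm,
      show p (v m') = Phi k J p (v m') from (phi_off hm').symm]
    exact (hvm m m' h1 h2 h3).2

include hJ1 hJk hB in
lemma head_seq {v : ℕ → Fin n} {E : ℕ} (hE : E < J) (hJk2 : J + 1 ≤ k)
    (hvm : ∀ m m', m < m' → m' ≤ E →
      v m < v m' ∧ Phi k J p (v m) < Phi k J p (v m')) :
    ∃ H : ℕ → Fin n, H E = mirror (Dst k J p) (v E) ∧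
      (∀ m m', m < m' → m' ≤ E → H m < H m' ∧ p (H m) < p (H m')) ∧
      (∀ m, m ≤ E → ((H m):ℕ) ≤ rhiOr (Dst k J p) (v E)) := by
  have hpq : ∀ x : Fin n, p (mirror (Dst k J p) x) = Phi k J p x := fun x => (phi_apply x).symm
  by_cases hex : ∃ m, m ≤ E ∧ v m ∈ Dst k J p
  · obtain ⟨m₀, hm₀E, hm₀D⟩ := hex
    have hgreatest : ∃ i₁, i₁ ≤ E ∧ v i₁ ∈ Dst k J p ∧
        ∀ m, i₁ < m → m ≤ E → v m ∉ Dst k J p :=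
      ⟨Nat.findGreatest (fun m => v m ∈ Dst k J p) E, Nat.findGreatest_le E,
        Nat.findGreatest_spec (P := fun m => v m ∈ Dst k J p) hm₀E hm₀D,
        fun m h1 h2 => Nat.findGreatest_is_greatest (P := fun m => v m ∈ Dst k J p) h1 h2⟩
    obtain ⟨i₁, hi₁E, hi₁D, hmax⟩ := hgreatest
    obtain ⟨U, hU, hUl, hUh, hWup, hWlo⟩ := block_struct hJ1 hJk hB hi₁D
    set H : ℕ → Fin n := fun m => if m < i₁ then U m else mirror (Dst k J p) (v m) with hH
    have hHlt : ∀ m, m < i₁ → H m = U m := by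
      intro m h; simp [hH, h]
    have hHge : ∀ m, i₁ ≤ m → H m = mirror (Dst k J p) (v m) := by
      intro m h; simp [hH, show ¬ (m < i₁) by omega]
    have hgid : ∀ m'', i₁ < m'' → m'' ≤ E → mirror (Dst k J p) (v m'') = v m'' := by
      intro m'' ha hb; exact mirror_of_not_mem (hmax m'' ha hb)
    have hmono : ∀ m m', m < m' → m' ≤ E → H m < H m' ∧ p (H m) < p (H m') := by
      intro m m' h2 h3
      by_cases hc1 : m < i₁
      · rw [hHlt m hc1]
        by_cases hc2 : m' < i₁
        · rw [hHlt m' hc2]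
          exact hU m m' h2 (by omega)
        · rw [hHge m' (by omega)]
          have hUm : (U m : ℕ) < rlo (Dst k J p) (v i₁) := by
            have h5 : (U m : ℕ) < (U (J-1) : ℕ) := (hU m (J-1) (by omega) (by omega)).1
            omega
          have hVlo : p (U m) < p (U (J-1)) := (hU m (J-1) (by omega) (by omega)).2
          have hmir1 : p (U (J-1)) < p (mirror (Dst k J p) (v i₁)) :=
            hWlo (mirror (Dst k J p) (v i₁)) (mirror_mem_run hi₁D).1 (mirror_mem_run hi₁D).2
          rcases Nat.eq_or_lt_of_le (show i₁ ≤ m' by omega) with he|hlt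
          · rw [← he]
            constructor
            · have h6 := (mirror_mem_run hi₁D).1
              rw [Fin.lt_def]; omega
            · exact hVlo.trans hmir1
          · rw [hgid m' hlt h3]
            have h7 : rhi (Dst k J p) (v i₁) < (v m' : ℕ) :=
              rhi_lt_of_not_mem hi₁D (le_of_lt (hvm i₁ m' hlt h3).1) (hmax m' hlt h3)
            constructor
            · rw [Fin.lt_def]
              have := rlo_le hi₁D; have := le_rhi hi₁D
              omega
            · have h8 : p (mirror (Dst k J p) (v i₁)) < p (v m') := by
                rw [hpq, show p (v m') = Phi k J p (v m') from (phi_off (hmax m' hlt h3)).symm]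
                exact (hvm i₁ m' hlt h3).2
              exact hVlo.trans (hmir1.trans h8)
      · rw [hHge m (by omega), hHge m' (by omega)]
        rcases Nat.eq_or_lt_of_le (show i₁ ≤ m by omega) with he|hlt
        · rw [← he, hgid m' (by omega) h3]
          have h7 : rhi (Dst k J p) (v i₁) < (v m' : ℕ) := by
            refine rhi_lt_of_not_mem hi₁D ?_ (hmax m' (by omega) h3)
            exact le_of_lt (show (v i₁ :ℕ) < (v m':ℕ) from (he ▸ (hvm m m' h2 h3).1 : v i₁ < v m'))
          constructor
          · rw [Fin.lt_def]
            have := (mirror_mem_run hi₁D).2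
            omega
          · rw [hpq, show p (v m') = Phi k J p (v m') from (phi_off (hmax m' (by omega) h3)).symm]
            exact he ▸ (hvm m m' h2 h3).2
        · rw [hgid m hlt (by omega), hgid m' (by omega) h3]
          refine ⟨(hvm m m' h2 h3).1, ?_⟩
          rw [show p (v m) = Phi k J p (v m) from (phi_off (hmax m hlt (by omega))).symm,
            show p (v m') = Phi k J p (v m') from (phi_off (hmax m' (by omega) h3)).symm]
          exact (hvm m m' h2 h3).2
    refine ⟨H, hHge E (by omega), hmono, ?_⟩
    intro m hm
    rcases Nat.eq_or_lt_of_le hm with he|hlt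
    · rw [he, hHge E (by omega)]
      exact mirror_le_rhiOr
    · have h1 := (hmono m E hlt (le_refl _)).1
      rw [hHge E (by omega)] at h1
      have h3 := mirror_le_rhiOr (S := Dst k J p) (x := v E)
      rw [Fin.lt_def] at h1
      omega
  · push_neg at hex
    refine ⟨fun m => v m, (mirror_of_not_mem (hex E (le_refl _))).symm, ?_, ?_⟩
    · intro m m' h2 h3
      refine ⟨(hvm m m' h2 h3).1, ?_⟩
      rw [show p (v m) = Phi k J p (v m) from (phi_off (hex m (by omega))).symm,
        show p (v m') = Phi k J p (v m') from (phi_off (hex m' h3)).symm]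
      exact (hvm m m' h2 h3).2
    · intro m hm
      rcases Nat.eq_or_lt_of_le hm with he|hlt
      · show ((v m):ℕ) ≤ rhiOr (Dst k J p) (v E)
        rw [he]; exact le_rhiOr
      · have h1 := (hvm m E hlt (le_refl _)).1
        rw [Fin.lt_def] at h1
        have h3 := le_rhiOr (S := Dst k J p) (x := v E)
        show ((v m):ℕ) ≤ rhiOr (Dst k J p) (v E)
        omega

end QFacts

end

end ADM

namespace ADM

open Classical
noncomputable section

variable {n : ℕ}

section Chain

variable {k J : ℕ} {p : Equiv.Perm (Fin n)}

lemma pseq_of_chain {u : ℕ → Fin n}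
    (hcons : ∀ i, i + 1 < k → u i < u (i+1) ∧ p (u i) < p (u (i+1))) : PSeq k p u := by
  have main : ∀ d i, i + d + 1 < k → u i < u (i + d + 1) ∧ p (u i) < p (u (i + d + 1)) := by
    intro d
    induction d with
    | zero => exact fun i h => hcons i h
    | succ d ih =>
      intro i h
      have h1 := ih i (by omega)
      have h2 := hcons (i + d + 1) (by omega)
      have e : i + (d + 1) + 1 = (i + d + 1) + 1 := by omega
      rw [e]
      exact ⟨h1.1.trans h2.1, h1.2.trans h2.2⟩
  intro i i' h hk'
  have e : i' = i + (i' - i - 1) + 1 := by omega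
  rw [e]
  exact main (i' - i - 1) i (by omega)

lemma cfg_of_bounds (hJ1 : 1 ≤ J) (hJk : J + 1 ≤ k) {u : ℕ → Fin n} {w : Fin n}
    (hu : PSeq k p u) (h1 : u (J-1) < w) (h2 : w < u J) : Cfg k J p u w := by
  refine ⟨hu, ?_⟩
  intro i hi
  have himp1 : i < J → u i < w := by
    intro h
    rcases Nat.eq_or_lt_of_le (show i ≤ J - 1 by omega) with he|hlt
    · rw [he]; exact h1
    · exact ((hu i (J-1) hlt (by omega)).1).trans h1
  have himp2 : J ≤ i → w < u i := by
    intro h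
    rcases Nat.eq_or_lt_of_le h with he|hlt
    · rw [← he]; exact h2
    · exact h2.trans (hu J i hlt hi).1
  constructor
  · constructor
    · intro h'
      by_contra hcon
      exact absurd (h'.trans (himp2 (by omega))) (lt_irrefl _)
    · exact himp1
  · constructor
    · intro h'
      by_contra hcon
      exact absurd (h'.trans (himp1 (by omega))) (lt_irrefl _)
    · exact himp2

end Chain

section ClaimQ

variable {k J : ℕ} {p : Equiv.Perm (Fin n)}
variable (hJ1 : 1 ≤ J) (hJk : J + 1 ≤ k)
  (hB : ∀ u w, Cfg k J p u w → RankIs k p u w (J+1))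

include hJ1 hJk hB in
lemma claimQ {v : ℕ → Fin n} {w : Fin n} (hcfg : Cfg k J (Phi k J p) v w) :
    RankIs k (Phi k J p) v w J ∧ w ∈ Dst k J p ∧ ((v J):ℕ) ≤ rhi (Dst k J p) w := by
  obtain ⟨hv, hg⟩ := hcfg
  have hpq : ∀ x : Fin n, p (mirror (Dst k J p) x) = Phi k J p x := fun x => (phi_apply x).symm
  have hvJw : w < v J := (hg J (by omega)).2.mpr (le_refl _)
  have hvJ1w : v (J-1) < w := (hg (J-1) (by omega)).1.mpr (by omega)
  have hvmJ1J : Phi k J p (v (J-1)) < Phi k J p (v J) := (hv (J-1) J (by omega) (by omega)).2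
  -- the tail sequence
  obtain ⟨T, hTJ, hTmono⟩ := tail_seq hJ1 hJk hB (v := v) (fun m m' h1 h2 h3 => hv m m' h2 h3)
  have hpTJ : p (T J) = Phi k J p (v J) := by rw [hTJ]; exact hpq (v J)
  -- Main part: w must lie in Dst with v J in the same run.
  have hmain : w ∈ Dst k J p ∧ ((v J):ℕ) ≤ rhi (Dst k J p) w := by
    by_contra hcon
    -- first: T J is beyond the obstruction
    have hTJpos : ∀ hwD : w ∈ Dst k J p, rhi (Dst k J p) w + 1 ≤ ((T J):ℕ) ∧
        (v J ∈ Dst k J p → rhi (Dst k J p) w + 1 < ((T J):ℕ)) := by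
      intro hwD
      have hsep : rhi (Dst k J p) w < ((v J):ℕ) := by
        by_contra hcon2
        exact hcon ⟨hwD, by omega⟩
      rw [hTJ]
      by_cases hvJD : v J ∈ Dst k J p
      · have h1 := rhi_add_one_lt_rlo hwD hvJD hsep
        have h2 := (mirror_mem_run hvJD).1
        exact ⟨by omega, fun _ => by omega⟩
      · rw [mirror_of_not_mem hvJD]
        exact ⟨by omega, fun h => absurd h hvJD⟩
    have hTJw : ∀ hwD : w ∈ Dst k J p, ((mirror (Dst k J p) w):ℕ) < ((T J):ℕ) := by
      intro hwD
      have h1 := (hTJpos hwD).1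
      have h2 := (mirror_mem_run hwD).2
      omega
    have hTJw' : w ∉ Dst k J p → ((w:ℕ)) < ((T J):ℕ) := by
      intro hwnD
      rw [hTJ]
      by_cases hvJD : v J ∈ Dst k J p
      · have h1 := lt_rlo_of_not_mem hvJD (le_of_lt (show (w:ℕ) < ((v J):ℕ) from hvJw)) hwnD
        have h2 := (mirror_mem_run hvJD).1
        omega
      · rw [mirror_of_not_mem hvJD]
        exact hvJw
    -- build the head and conclude
    by_cases hflank : w ∈ Dst k J p ∧ rlo (Dst k J p) w ≤ ((v (J-1)):ℕ)
    · -- flank head from the run of w itself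
      obtain ⟨hwD, hin⟩ := hflank
      have hJ1r : ((v (J-1)):ℕ) ≤ rhi (Dst k J p) w := by
        have h1 : ((v (J-1)):ℕ) < (w:ℕ) := hvJ1w
        have := le_rhi hwD
        omega
      have hvJ1D : v (J-1) ∈ Dst k J p := run_mem hwD hin hJ1r
      have hrunJ1 := run_eq hwD hin hJ1r
      obtain ⟨U, hU, hUl, hUh, hWup, hWlo⟩ := block_struct hJ1 hJk hB hwD
      set useq : ℕ → Fin n := fun i => if i < J then U i else T i with huseq
      have hus1 : ∀ i, i < J → useq i = U i := by intro i h; simp [huseq, h]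
      have hus2 : ∀ i, J ≤ i → useq i = T i := by
        intro i h; simp [huseq, show ¬ (i < J) by omega]
      have hjunc : p (U (J-1)) < p (T J) := by
        have h1 : p (U (J-1)) < p (mirror (Dst k J p) (v (J-1))) := by
          apply hWlo
          · rw [← hrunJ1.1]; exact (mirror_mem_run hvJ1D).1
          · rw [← hrunJ1.2]; exact (mirror_mem_run hvJ1D).2
        rw [hpq] at h1
        rw [hpTJ]
        exact h1.trans hvmJ1J
      have hpseq : PSeq k p useq := by
        apply pseq_of_chain
        intro i hik
        rcases Nat.lt_trichotomy (i+1) J with h1|h1|h1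
        · rw [hus1 i (by omega), hus1 (i+1) h1]
          exact hU i (i+1) (by omega) (by omega)
        · rw [hus1 i (by omega), hus2 (i+1) (by omega), h1]
          constructor
          · have h2 : (U i :ℕ) ≤ (U (J-1) :ℕ) := by
              rcases Nat.eq_or_lt_of_le (show i ≤ J-1 by omega) with he|hlt
              · rw [he]
              · exact le_of_lt (hU i (J-1) hlt (by omega)).1
            have h3 := hTJw hwD
            have h4 := (mirror_mem_run hwD).1
            rw [Fin.lt_def]
            omega
          · have h2 : p (U i) ≤ p (U (J-1)) := by
              rcases Nat.eq_or_lt_of_le (show i ≤ J-1 by omega) with he|hlt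
              · rw [he]
              · exact le_of_lt (hU i (J-1) hlt (by omega)).2
            exact lt_of_le_of_lt h2 hjunc
        · rw [hus2 i (by omega), hus2 (i+1) (by omega)]
          exact hTmono i (i+1) (by omega) (by omega) hik
      have hcfg2 : Cfg k J p useq (mirror (Dst k J p) w) := by
        apply cfg_of_bounds hJ1 hJk hpseq
        · rw [hus1 (J-1) (by omega), Fin.lt_def]
          have h4 := (mirror_mem_run hwD).1
          omega
        · rw [hus2 J (by omega), Fin.lt_def]
          exact hTJw hwD
      -- contradiction: the position rhi w + 1 would lie in Dst
      have hlt2 : rhi (Dst k J p) w + 1 < n := by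
        have h1 := (hTJpos hwD).1
        have := (T J).isLt
        omega
      have hmem2 : (⟨rhi (Dst k J p) w + 1, hlt2⟩ : Fin n) ∈ Dst k J p := by
        apply cfg_mem_Dst hcfg2
        · rw [Fin.le_def]
          have := (mirror_mem_run hwD).2
          simp
          omega
        · rw [hus2 J (by omega), Fin.le_def]
          exact (hTJpos hwD).1
      exact succ_rhi_not_mem hwD rfl hmem2
    · -- avatar head
      have hall : ∀ i, i ≤ J - 1 → ¬ (w ∈ Dst k J p ∧ rlo (Dst k J p) w ≤ ((v i):ℕ)) := by
        intro i hi hcon2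
        apply hflank
        refine ⟨hcon2.1, ?_⟩
        rcases Nat.eq_or_lt_of_le hi with he|hlt
        · rw [← he]; exact hcon2.2
        · have := (hv i (J-1) (by omega) (by omega)).1
          rw [Fin.lt_def] at this
          omega
      obtain ⟨H, hHE, hHmono, hHcap⟩ := head_seq hJ1 hJk hB (show J - 1 < J by omega) hJk
        (v := v) (fun m m' h2 h3 => hv m m' h2 (by omega))
      -- cap bound: the whole head sits strictly before mirror w
      have hcapw : rhiOr (Dst k J p) (v (J-1)) < ((mirror (Dst k J p) w):ℕ) := by
        by_cases hwD : w ∈ Dst k J p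
        · have h1 : ((v (J-1)):ℕ) < rlo (Dst k J p) w := by
            have := hall (J-1) (le_refl _)
            push_neg at this
            have := this hwD
            omega
          have h2 := rhiOr_lt_of_sep (S := Dst k J p) hwD h1
          have h3 := (mirror_mem_run hwD).1
          omega
        · rw [mirror_of_not_mem hwD]
          exact rhiOr_lt_of_not_mem hvJ1w hwD
      set useq : ℕ → Fin n := fun i => if i < J then H i else T i with huseq
      have hus1 : ∀ i, i < J → useq i = H i := by intro i h; simp [huseq, h]
      have hus2 : ∀ i, J ≤ i → useq i = T i := by
        intro i h; simp [huseq, show ¬ (i < J) by omega]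
      have hjunc : p (H (J-1)) < p (T J) := by
        rw [hHE, hpq, hpTJ]
        exact hvmJ1J
      have hTJbig : ((mirror (Dst k J p) w):ℕ) < ((T J):ℕ) ∨
          (w ∉ Dst k J p ∧ ((w:ℕ)) < ((T J):ℕ)) := by
        by_cases hwD : w ∈ Dst k J p
        · exact Or.inl (hTJw hwD)
        · exact Or.inr ⟨hwD, hTJw' hwD⟩
      have hmirw : ∀ i, i ≤ J - 1 → ((H i):ℕ) < ((mirror (Dst k J p) w):ℕ) := by
        intro i hi
        have h1 := hHcap i hi
        omega
      have hpseq : PSeq k p useq := by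
        apply pseq_of_chain
        intro i hik
        rcases Nat.lt_trichotomy (i+1) J with h1|h1|h1
        · rw [hus1 i (by omega), hus1 (i+1) h1]
          exact hHmono i (i+1) (by omega) (by omega)
        · rw [hus1 i (by omega), hus2 (i+1) (by omega), h1]
          constructor
          · have h2 : ((H i):ℕ) ≤ ((H (J-1)):ℕ) := by
              rcases Nat.eq_or_lt_of_le (show i ≤ J-1 by omega) with he|hlt
              · rw [he]
              · exact le_of_lt (hHmono i (J-1) hlt (le_refl _)).1
            have h3 := hmirw (J-1) (le_refl _)
            have h4 : ((mirror (Dst k J p) w):ℕ) < ((T J):ℕ) := by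
              rcases hTJbig with h|h
              · exact h
              · rw [mirror_of_not_mem h.1]; exact h.2
            rw [Fin.lt_def]
            omega
          · have h2 : p (H i) ≤ p (H (J-1)) := by
              rcases Nat.eq_or_lt_of_le (show i ≤ J-1 by omega) with he|hlt
              · rw [he]
              · exact le_of_lt (hHmono i (J-1) hlt (le_refl _)).2
            exact lt_of_le_of_lt h2 hjunc
        · rw [hus2 i (by omega), hus2 (i+1) (by omega)]
          exact hTmono i (i+1) (by omega) (by omega) hik
      have hcfg2 : Cfg k J p useq (mirror (Dst k J p) w) := by
        apply cfg_of_bounds hJ1 hJk hpseq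
        · rw [hus1 (J-1) (by omega), Fin.lt_def]
          exact hmirw (J-1) (le_refl _)
        · rw [hus2 J (by omega), Fin.lt_def]
          rcases hTJbig with h|h
          · exact h
          · rw [mirror_of_not_mem h.1]; exact h.2
      by_cases hwD : w ∈ Dst k J p
      · have hlt2 : rhi (Dst k J p) w + 1 < n := by
          have h1 := (hTJpos hwD).1
          have := (T J).isLt
          omega
        have hmem2 : (⟨rhi (Dst k J p) w + 1, hlt2⟩ : Fin n) ∈ Dst k J p := by
          apply cfg_mem_Dst hcfg2
          · rw [Fin.le_def]
            have := (mirror_mem_run hwD).2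
            simp
            omega
          · rw [hus2 J (by omega), Fin.le_def]
            exact (hTJpos hwD).1
        exact succ_rhi_not_mem hwD rfl hmem2
      · have hmem2 : w ∈ Dst k J p := by
          have h1 : mirror (Dst k J p) w = w := mirror_of_not_mem hwD
          have h2 := cfg_mem_Dst hcfg2 (le_refl _) (by
            rw [hus2 J (by omega), Fin.le_def, h1]
            exact le_of_lt (hTJw' hwD))
          rwa [h1] at h2
        exact hwD hmem2
  -- now the positive part
  obtain ⟨hwD, hvJr⟩ := hmain
  have hvJD : v J ∈ Dst k J p := run_mem hwD (by have := rlo_le hwD; have : (w:ℕ) < ((v J):ℕ) := hvJw; omega) hvJr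
  have hqwJ : Phi k J p w < Phi k J p (v J) := phi_run_mono hJ1 hJk hB hwD hvJw hvJr
  obtain ⟨U, hU, hUl, hUh, hWup, hWlo⟩ := block_struct hJ1 hJk hB hwD
  have hrunvJ := run_eq hwD (by have := rlo_le hwD; have : (w:ℕ) < ((v J):ℕ) := hvJw; omega) hvJr
  have hwplus_run : rlo (Dst k J p) w ≤ ((mirror (Dst k J p) (v J)):ℕ) ∧
      ((mirror (Dst k J p) (v J)):ℕ) ≤ rhi (Dst k J p) w := by
    have h1 := (mirror_mem_run hvJD).1
    have h2 := (mirror_mem_run hvJD).2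
    rw [hrunvJ.1] at h1
    rw [hrunvJ.2] at h2
    exact ⟨h1, h2⟩
  have hqJm1 : Phi k J p (v (J-1)) < Phi k J p w := by
    by_cases hin : rlo (Dst k J p) w ≤ ((v (J-1)):ℕ)
    · -- same run: monotone
      have hJ1r : ((v (J-1)):ℕ) ≤ rhi (Dst k J p) w := by
        have h1 : ((v (J-1)):ℕ) < (w:ℕ) := hvJ1w
        have := le_rhi hwD
        omega
      have hvJ1D : v (J-1) ∈ Dst k J p := run_mem hwD hin hJ1r
      have hrunJ1 := run_eq hwD hin hJ1r
      refine phi_run_mono hJ1 hJk hB hvJ1D hvJ1w ?_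
      rw [hrunJ1.2]
      exact le_rhi hwD
    · push_neg at hin
      by_cases hc1 : v (J-1) ∈ Dst k J p
      · -- (c-1): impossible
        exfalso
        obtain ⟨U', hU', hU'l, hU'h, hW'up, hW'lo⟩ := block_struct hJ1 hJk hB hc1
        have hsep : rhi (Dst k J p) (v (J-1)) < rlo (Dst k J p) w := run_sep hc1 hwD hin
        set useq : ℕ → Fin n := fun i =>
          if i < J then U' i else if i = J then mirror (Dst k J p) (v J) else U i with huseq
        have hus1 : ∀ i, i < J → useq i = U' i := by intro i h; simp [huseq, h]
        have husJ : useq J = mirror (Dst k J p) (v J) := by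
          simp [huseq, show ¬ (J < J) by omega]
        have hus2 : ∀ i, J < i → useq i = U i := by
          intro i h; simp [huseq, show ¬ (i < J) by omega, show i ≠ J by omega]
        have hjunc1 : p (U' (J-1)) < p (mirror (Dst k J p) (v J)) := by
          have h1 : p (U' (J-1)) < p (mirror (Dst k J p) (v (J-1))) :=
            hW'lo _ (mirror_mem_run hc1).1 (mirror_mem_run hc1).2
          rw [hpq] at h1
          have h2 : p (mirror (Dst k J p) (v J)) = Phi k J p (v J) := hpq (v J)
          rw [h2]
          exact h1.trans hvmJ1J
        have hjunc2 : ∀ i, J < i → i < k → p (mirror (Dst k J p) (v J)) < p (U i) := by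
          intro i h1 h2
          exact hWup _ hwplus_run.1 hwplus_run.2 i (by omega) h2
        have hpseq : PSeq k p useq := by
          apply pseq_of_chain
          intro i hik
          rcases Nat.lt_trichotomy (i+1) J with h1|h1|h1
          · rw [hus1 i (by omega), hus1 (i+1) h1]
            exact hU' i (i+1) (by omega) (by omega)
          · rw [hus1 i (by omega), show i + 1 = J from h1, husJ]
            constructor
            · have h2 : (U' i :ℕ) ≤ (U' (J-1) :ℕ) := by
                rcases Nat.eq_or_lt_of_le (show i ≤ J-1 by omega) with he|hlt
                · rw [he]
                · exact le_of_lt (hU' i (J-1) hlt (by omega)).1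
              rw [Fin.lt_def]
              have h3 := hwplus_run.1
              have h4 := rlo_le hc1
              have h5 := le_rhi hc1
              omega
            · have h2 : p (U' i) ≤ p (U' (J-1)) := by
                rcases Nat.eq_or_lt_of_le (show i ≤ J-1 by omega) with he|hlt
                · rw [he]
                · exact le_of_lt (hU' i (J-1) hlt (by omega)).2
              exact lt_of_le_of_lt h2 hjunc1
          · rcases Nat.eq_or_lt_of_le (show J ≤ i by omega) with he|hlt
            · have hieq : i = J := by omega
              subst hieq
              rw [husJ, hus2 (i+1) (by omega)]
              constructor
              · rw [Fin.lt_def]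
                have h2 : (U i :ℕ) < (U (i+1) :ℕ) := (hU i (i+1) (by omega) hik).1
                have h3 := hwplus_run.2
                omega
              · exact hjunc2 (i+1) (by omega) hik
            · rw [hus2 i (by omega), hus2 (i+1) (by omega)]
              exact hU i (i+1) (by omega) hik
        have hcfg2 : Cfg k J p useq (mirror (Dst k J p) (v (J-1))) := by
          apply cfg_of_bounds hJ1 hJk hpseq
          · rw [hus1 (J-1) (by omega), Fin.lt_def]
            have h1 := (mirror_mem_run hc1).1
            omega
          · rw [husJ, Fin.lt_def]
            have h1 := (mirror_mem_run hc1).2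
            have h2 := hwplus_run.1
            omega
        have h6 : p (useq J) < p (mirror (Dst k J p) (v (J-1))) :=
          ((hB useq _ hcfg2) J (by omega)).1.mpr (by omega)
        rw [husJ, hpq, hpq] at h6
        exact absurd (h6.trans hvmJ1J) (lt_irrefl _)
      · -- v (J-1) ∉ Dst
        have hvJ1lo : ((v (J-1)):ℕ) + 1 ≤ rlo (Dst k J p) w := by omega
        rcases Nat.eq_or_lt_of_le hvJ1lo with he|hlt
        · -- (c-2): v (J-1) is the left flank position
          have heU : v (J-1) = U (J-1) := Fin.ext (by omega)
          have h1 : p (U (J-1)) < p (mirror (Dst k J p) w) :=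
            hWlo _ (mirror_mem_run hwD).1 (mirror_mem_run hwD).2
          rw [← heU, hpq] at h1
          have h2 : Phi k J p (v (J-1)) = p (v (J-1)) := phi_off hc1
          rw [h2]
          have h3 : p (v (J-1)) < Phi k J p w := h1
          exact h3
        · -- (c-3): impossible
          exfalso
          obtain ⟨H, hHE, hHmono, hHcap⟩ := head_seq hJ1 hJk hB (show J - 2 < J by omega) hJk
            (v := v) (fun m m' h2 h3 => hv m m' h2 (by omega))
          -- H is only meaningful when J ≥ 2
          set useq : ℕ → Fin n := fun i =>
            if i + 2 ≤ J then H i else if i + 1 = J then v (J-1)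
            else if i = J then mirror (Dst k J p) (v J) else U i with huseq
          have husA : ∀ i, i + 2 ≤ J → useq i = H i := by intro i h; simp [huseq, h]
          have husB : useq (J-1) = v (J-1) := by
            simp [huseq, show ¬ (J - 1 + 2 ≤ J) by omega, show J - 1 + 1 = J by omega]
          have husJ : useq J = mirror (Dst k J p) (v J) := by
            simp [huseq, show ¬ (J + 2 ≤ J) by omega, show ¬ (J + 1 = J) by omega]
          have hus2 : ∀ i, J < i → useq i = U i := by
            intro i h
            simp [huseq, show ¬ (i + 2 ≤ J) by omega, show ¬ (i + 1 = J) by omega,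
              show i ≠ J by omega]
          have hquJ1 : p (v (J-1)) = Phi k J p (v (J-1)) := (phi_off hc1).symm
          have hjuncBC : p (v (J-1)) < p (mirror (Dst k J p) (v J)) := by
            rw [hquJ1, hpq]
            exact hvmJ1J
          have hjunc2 : ∀ i, J < i → i < k → p (mirror (Dst k J p) (v J)) < p (U i) := by
            intro i h1 h2
            exact hWup _ hwplus_run.1 hwplus_run.2 i (by omega) h2
          have hpseq : PSeq k p useq := by
            apply pseq_of_chain
            intro i hik
            by_cases hA : i + 3 ≤ J
            · rw [husA i (by omega), husA (i+1) (by omega)]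
              exact hHmono i (i+1) (by omega) (by omega)
            · by_cases hAB : i + 2 = J
              · rw [husA i (by omega), show i + 1 = J - 1 by omega, husB]
                have hiE : i = J - 2 := by omega
                rw [hiE, hHE]
                constructor
                · rw [Fin.lt_def]
                  have h2 : ((mirror (Dst k J p) (v (J-2))):ℕ) ≤ rhiOr (Dst k J p) (v (J-2)) :=
                    mirror_le_rhiOr
                  have h3 : rhiOr (Dst k J p) (v (J-2)) < ((v (J-1)):ℕ) :=
                    rhiOr_lt_of_not_mem ((hv (J-2) (J-1) (by omega) (by omega)).1) hc1
                  omega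
                · rw [hpq, hquJ1]
                  exact (hv (J-2) (J-1) (by omega) (by omega)).2
              · by_cases hBC : i + 1 = J
                · have hieq : i = J - 1 := by omega
                  subst hieq
                  rw [show J - 1 + 1 = J by omega, husB, husJ]
                  refine ⟨?_, hjuncBC⟩
                  rw [Fin.lt_def]
                  have h2 := hwplus_run.1
                  omega
                · rcases Nat.eq_or_lt_of_le (show J ≤ i by omega) with he|hlt2
                  · have hieq : i = J := by omega
                    subst hieq
                    rw [husJ, hus2 (i+1) (by omega)]
                    constructor
                    · rw [Fin.lt_def]
                      have h2 : (U i :ℕ) < (U (i+1) :ℕ) := (hU i (i+1) (by omega) hik).1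
                      have h3 := hwplus_run.2
                      omega
                    · exact hjunc2 (i+1) (by omega) hik
                  · rw [hus2 i (by omega), hus2 (i+1) (by omega)]
                    exact hU i (i+1) (by omega) hik
          have hlopos : 1 ≤ rlo (Dst k J p) w := rlo_pos hJ1 hJk hB hwD
          have htlt : rlo (Dst k J p) w - 1 < n := by
            have := rlo_le hwD
            have := w.isLt
            omega
          set t₀ : Fin n := ⟨rlo (Dst k J p) w - 1, htlt⟩ with ht₀
          have ht₀U : t₀ = U (J-1) := Fin.ext (by simp [ht₀]; omega)
          have hcfg2 : Cfg k J p useq t₀ := by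
            apply cfg_of_bounds hJ1 hJk hpseq
            · rw [husB, Fin.lt_def]
              simp [ht₀]
              omega
            · rw [husJ, Fin.lt_def]
              have h2 := hwplus_run.1
              simp [ht₀]
              omega
          have h6 : p (useq J) < p t₀ := ((hB useq _ hcfg2) J (by omega)).1.mpr (by omega)
          rw [husJ, ht₀U] at h6
          have h7 : p (U (J-1)) < p (mirror (Dst k J p) (v J)) :=
            hWlo _ hwplus_run.1 hwplus_run.2
          exact absurd (h6.trans h7) (lt_irrefl _)
  -- assemble the rank statement
  refine ⟨?_, hwD, hvJr⟩
  intro i hi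
  have himp1 : i < J → Phi k J p (v i) < Phi k J p w := by
    intro h
    rcases Nat.eq_or_lt_of_le (show i ≤ J-1 by omega) with he|hlt
    · rw [he]; exact hqJm1
    · exact ((hv i (J-1) hlt (by omega)).2).trans hqJm1
  have himp2 : J ≤ i → Phi k J p w < Phi k J p (v i) := by
    intro h
    rcases Nat.eq_or_lt_of_le h with he|hlt
    · rw [← he]; exact hqwJ
    · exact hqwJ.trans (hv J i hlt hi).2
  constructor
  · constructor
    · intro h'
      by_contra hcon
      exact absurd (h'.trans (himp2 (by omega))) (lt_irrefl _)
    · exact himp1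
  · constructor
    · intro h'
      by_contra hcon
      exact absurd (h'.trans (himp1 (by omega))) (lt_irrefl _)
    · exact himp2

end ClaimQ

end

end ADM

namespace ADM

open Classical
noncomputable section

variable {n : ℕ}

section Final

variable {k J : ℕ} {p : Equiv.Perm (Fin n)}
variable (hJ1 : 1 ≤ J) (hJk : J + 1 ≤ k)
  (hB : ∀ u w, Cfg k J p u w → RankIs k p u w (J+1))

include hJ1 hJk hB in
lemma dst_covered {s : Fin n} (hs : s ∈ Dst k J p)
    (hnext : (s:ℕ) + 1 ≤ rhi (Dst k J p) s) :
    ∃ v : ℕ → Fin n, Cfg k J (Phi k J p) v s ∧ ((v J):ℕ) = (s:ℕ) + 1 := by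
  obtain ⟨U, hU, hUl, hUh, hWup, hWlo⟩ := block_struct hJ1 hJk hB hs
  have hsnextlt : (s:ℕ) + 1 < n := by have := rhi_lt hs; omega
  set sn : Fin n := ⟨(s:ℕ)+1, hsnextlt⟩ with hsn
  have hsnD : sn ∈ Dst k J p := run_mem hs (by have := rlo_le hs; simp [hsn]; omega) (by simp [hsn]; omega)
  have hrun_sn := run_eq hs (show rlo (Dst k J p) s ≤ (sn:ℕ) by have := rlo_le hs; simp [hsn]; omega)
    (show (sn:ℕ) ≤ rhi (Dst k J p) s by simp [hsn]; omega)
  have hUJ1nD : U (J-1) ∉ Dst k J p := pred_rlo_not_mem hs hUl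
  have hmsn : rlo (Dst k J p) s ≤ ((mirror (Dst k J p) sn):ℕ) ∧
      ((mirror (Dst k J p) sn):ℕ) ≤ rhi (Dst k J p) s := by
    have h1 := (mirror_mem_run hsnD).1
    have h2 := (mirror_mem_run hsnD).2
    rw [hrun_sn.1] at h1
    rw [hrun_sn.2] at h2
    exact ⟨h1, h2⟩
  have hUsep : ∀ a b, a < b → b < k → U a ∈ Dst k J p → U b ∈ Dst k J p →
      rhi (Dst k J p) (U a) < ((U b):ℕ) := by
    intro a b hab hbk haD hbD
    by_contra hcon
    push_neg at hcon
    have h1 : p (U b) < p (U a) :=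
      run_desc hJ1 hJk hB haD (show ((U a):ℕ) < ((U b):ℕ) from (hU a b hab hbk).1) hcon
    exact absurd ((hU a b hab hbk).2.trans h1) (lt_irrefl _)
  set v : ℕ → Fin n := fun i => if i = J then sn else mirror (Dst k J p) (U i) with hv
  have hvJ : v J = sn := by simp [hv]
  have hvne : ∀ i, i ≠ J → v i = mirror (Dst k J p) (U i) := by
    intro i h; simp [hv, h]
  have hqmir : ∀ x : Fin n, Phi k J p (mirror (Dst k J p) x) = p x := phi_mirror
  have hpseq : PSeq k (Phi k J p) v := by
    apply pseq_of_chain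
    intro i hik
    rcases Nat.lt_trichotomy (i+1) J with h1|h1|h1
    · rw [hvne i (by omega), hvne (i+1) (by omega)]
      constructor
      · exact mirror_preserve (hU i (i+1) (by omega) (by omega)).1
          (fun ha hb => hUsep i (i+1) (by omega) (by omega) ha hb)
      · rw [hqmir, hqmir]
        exact (hU i (i+1) (by omega) (by omega)).2
    · rw [hvne i (by omega), show i + 1 = J from h1, hvJ,
        show i = J - 1 by omega]
      rw [mirror_of_not_mem hUJ1nD]
      constructor
      · rw [Fin.lt_def]
        have := rlo_le hs
        simp [hsn]
        omega
      · rw [show Phi k J p (U (J-1)) = p (U (J-1)) from phi_off hUJ1nD, phi_apply]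
        exact hWlo _ hmsn.1 hmsn.2
    · rcases Nat.eq_or_lt_of_le (show J ≤ i by omega) with he|hlt
      · have hieq : i = J := by omega
        rw [hieq, hvJ, hvne (J+1) (by omega)]
        have hJ1k : J + 1 < k := by omega
        constructor
        · have h2 : (U J : ℕ) < (U (J+1) : ℕ) := (hU J (J+1) (by omega) hJ1k).1
          by_cases hD2 : U (J+1) ∈ Dst k J p
          · have h3 : rhi (Dst k J p) sn < ((U (J+1)):ℕ) := by
              rw [hrun_sn.2]; omega
            have h4 := rhi_add_one_lt_rlo hsnD hD2 h3
            have h5 := (mirror_mem_run hD2).1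
            rw [Fin.lt_def]
            have h6 := hrun_sn.2
            simp [hsn]
            omega
          · rw [mirror_of_not_mem hD2, Fin.lt_def]
            simp [hsn]
            omega
        · rw [hqmir, phi_apply]
          exact hWup _ hmsn.1 hmsn.2 (J+1) (by omega) hJ1k
      · rw [hvne i (by omega), hvne (i+1) (by omega)]
        constructor
        · exact mirror_preserve (hU i (i+1) (by omega) (by omega)).1
            (fun ha hb => hUsep i (i+1) (by omega) (by omega) ha hb)
        · rw [hqmir, hqmir]
          exact (hU i (i+1) (by omega) (by omega)).2
  refine ⟨v, cfg_of_bounds hJ1 hJk hpseq ?_ ?_, by rw [hvJ]⟩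
  · rw [hvne (J-1) (by omega), mirror_of_not_mem hUJ1nD, Fin.lt_def]
    have := rlo_le hs
    omega
  · rw [hvJ, Fin.lt_def]
    simp [hsn]

include hJ1 hJk hB in
lemma dst_phi_eq : Dst k J (Phi k J p) = Dst k J p := by
  apply Set.ext
  intro t
  constructor
  · rintro ⟨v, w, hcfgq, h1, h2⟩
    obtain ⟨_, hwD, hvJr⟩ := claimQ hJ1 hJk hB hcfgq
    refine run_mem hwD ?_ ?_
    · have := rlo_le hwD
      have h1' : (w:ℕ) ≤ (t:ℕ) := h1
      omega
    · have h2' : (t:ℕ) ≤ ((v J):ℕ) := h2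
      omega
  · intro ht
    have hbd := dst_bounds hJ1 hJk hB ht
    rcases Nat.lt_or_ge (t:ℕ) (rhi (Dst k J p) t) with hcase|hcase
    · obtain ⟨v, hcfg, hvJ⟩ := dst_covered hJ1 hJk hB ht (by omega)
      exact ⟨v, t, hcfg, le_refl _, by rw [Fin.le_def]; omega⟩
    · -- t is the top of its run
      have hteq : (t:ℕ) = rhi (Dst k J p) t := le_antisymm (le_rhi ht) hcase
      have hslt : (t:ℕ) - 1 < n := by have := t.isLt; omega
      have hsD : (⟨(t:ℕ)-1, hslt⟩ : Fin n) ∈ Dst k J p := run_mem ht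
        (by have := rlo_le ht; simp only [Fin.val_mk]; omega)
        (by simp only [Fin.val_mk]; omega)
      have hrun_s := run_eq ht
        (show rlo (Dst k J p) t ≤ ((⟨(t:ℕ)-1, hslt⟩ : Fin n):ℕ) by
          have := rlo_le ht; simp only [Fin.val_mk]; omega)
        (show ((⟨(t:ℕ)-1, hslt⟩ : Fin n):ℕ) ≤ rhi (Dst k J p) t by simp only [Fin.val_mk]; omega)
      obtain ⟨v, hcfg, hvJ⟩ := dst_covered hJ1 hJk hB hsD
        (by rw [hrun_s.2]; simp only [Fin.val_mk]; omega)
      refine ⟨v, ⟨(t:ℕ)-1, hslt⟩, hcfg, ?_, ?_⟩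
      · rw [Fin.le_def]; simp only [Fin.val_mk]; omega
      · rw [Fin.le_def]
        have h9 : ((v J):ℕ) = ((t:ℕ) - 1) + 1 := by
          rw [hvJ]
        omega

lemma mirrorPerm_mul_self (S : Set (Fin n)) : mirrorPerm S * mirrorPerm S = 1 := by
  apply Equiv.ext
  intro x
  simp only [Equiv.Perm.mul_apply, Equiv.Perm.one_apply]
  exact mirror_involutive x

lemma phi_recover : Phi k J p * mirrorPerm (Dst k J p) = p := by
  rw [Phi, mul_assoc, mirrorPerm_mul_self, mul_one]

end Final

end

end ADM

/-- `|Av_n(M_{k,j,j+1})| ≤ |Av_n(M_{k,j,j})|`. -/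
theorem stmt11 (k j n : ℕ) (hk : 2 ≤ k) (hj1 : 2 ≤ j) (hj2 : j ≤ k) (hn : 1 ≤ n) :
    (Av n (MSet k j (j + 1))).ncard ≤ (Av n (MSet k j j)).ncard := by
  classical
  set J := j - 1 with hJdef
  have hj : j = J + 1 := by omega
  have hJ1 : 1 ≤ J := by omega
  have hJk : J + 1 ≤ k := by omega
  rw [hj]
  have key : ∀ p : Equiv.Perm (Fin n), p ∈ Av n (MSet k (J+1) (J+1+1)) →
      (∀ u w, ADM.Cfg k J p u w → ADM.RankIs k p u w (J+1)) := by
    intro p hp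
    have h1 := (ADM.av_iff (p := p) hJ1 hJk (i := J+2) (by omega) (by omega)).mp hp
    intro u w hc
    exact h1 u w hc
  apply Set.ncard_le_ncard_of_injOn (fun p => ADM.Phi k J p)
  · intro p hp
    have hB := key p hp
    refine (ADM.av_iff (p := ADM.Phi k J p) hJ1 hJk (i := J+1) (by omega) (by omega)).mpr ?_
    intro v w hc
    exact (ADM.claimQ hJ1 hJk hB hc).1
  · intro p1 h1 p2 h2 heq
    have hB1 := key p1 h1
    have hB2 := key p2 h2
    simp only at heq
    have hD1 : ADM.Dst k J (ADM.Phi k J p1) = ADM.Dst k J p1 := ADM.dst_phi_eq hJ1 hJk hB1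
    have hD2 : ADM.Dst k J (ADM.Phi k J p2) = ADM.Dst k J p2 := ADM.dst_phi_eq hJ1 hJk hB2
    have hDeq : ADM.Dst k J p1 = ADM.Dst k J p2 := by
      rw [← hD1, ← hD2, heq]
    have hrec1 : ADM.Phi k J p1 * ADM.mirrorPerm (ADM.Dst k J p1) = p1 := ADM.phi_recover
    have hrec2 : ADM.Phi k J p2 * ADM.mirrorPerm (ADM.Dst k J p2) = p2 := ADM.phi_recover
    rw [← hrec1, ← hrec2, heq, hDeq]
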